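/- arXiv:1001.5465 — 11 statements merged into one kernel-verified Lean document; each statement's English description precedes it below -/
import Mathlib

section
/- Let n, m be nonempty finite index types and let K : m → Matrix n n ℂ be a family of Kraus operators of an isometry, i.e., Σ_{j∈m} (K j)† (K j) = I. Suppose that for every unitary matrix V ∈ Matrix.unitaryGroup m ℂ and every k ∈ m there exists a real number p such that for every vector r : n → ℂ with Σ_i |r i|² = 1 one has Σ_i |((Σ_{j∈m} (V k j) • K j).mulVec r) i|² = p (i.e., the outcome probabilities of any measurement on the ancilla in any orthonormal basis are independent of the normalized input state r). Then there exist a unitary matrix U ∈ Matrix.unitaryGroup n ℂ and scalars c : m → ℂ such that K j = (c j) • U for every j ∈ m. -/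
open Matrix

section helpers
variable {n : Type*} [Fintype n] [DecidableEq n]

set_option linter.unusedSectionVars false

lemma polar (N : Matrix n n ℂ)
    (h : ∀ v : n → ℂ, star v ⬝ᵥ (N *ᵥ v) = 0) : N = 0 := by
  have key : ∀ (c d : ℂ) (i j : n),
      (starRingEnd ℂ c) * c * N i i + (starRingEnd ℂ c) * d * N i j
        + (starRingEnd ℂ d) * c * N j i + (starRingEnd ℂ d) * d * N j j = 0 := by
    intro c d i j
    have := h (c • (Pi.single i 1 : n → ℂ) + d • (Pi.single j 1 : n → ℂ))
    rw [← this]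
    simp [star_add, star_smul, mulVec_add, mulVec_smul, dotProduct_add, add_dotProduct,
      smul_dotProduct, dotProduct_smul, ← Pi.single_star, mulVec_single, single_dotProduct,
      smul_eq_mul]
    ring
  ext i j
  by_cases hij : i = j
  · subst hij
    simpa using key 1 0 i i
  · have hii := key 1 0 i i
    have hjj := key 1 0 j j
    simp at hii hjj
    have h1 := key 1 1 i j
    have h2 := key 1 Complex.I i j
    simp [hii, hjj, Complex.conj_I] at h1 h2
    simp only [Matrix.zero_apply]
    linear_combination h1 / 2 - Complex.I / 2 * h2 + (N i j - N j i) / 2 * Complex.I_sq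

lemma stardot (u : n → ℂ) :
    star u ⬝ᵥ u = ((∑ i, ‖u i‖ ^ 2 : ℝ) : ℂ) := by
  rw [Complex.ofReal_sum]
  simp only [dotProduct, Pi.star_apply]
  refine Finset.sum_congr rfl fun x _ => ?_
  rw [show star (u x) = (starRingEnd ℂ) (u x) from rfl,
    ← Complex.normSq_eq_conj_mul_self, ← Complex.sq_norm]

lemma dot_conj (A : Matrix n n ℂ) (v : n → ℂ) :
    star v ⬝ᵥ ((Aᴴ * A) *ᵥ v) = star (A *ᵥ v) ⬝ᵥ (A *ᵥ v) := by
  rw [star_mulVec, ← dotProduct_mulVec, mulVec_mulVec]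

lemma quad_to_scalar (A : Matrix n n ℂ) (p : ℝ)
    (h : ∀ r : n → ℂ, (∑ i, ‖r i‖ ^ 2 = 1) →
      ∑ i, ‖(A *ᵥ r) i‖ ^ 2 = p) :
    Aᴴ * A = (p : ℂ) • 1 := by
  have hscale : ∀ v : n → ℂ, (∑ i, ‖(A *ᵥ v) i‖ ^ 2)
      = p * ∑ i, ‖v i‖ ^ 2 := by
    intro v
    by_cases hv : v = 0
    · simp [hv, mulVec_zero]
    · set c : ℝ := ∑ i, ‖v i‖ ^ 2 with hc
      have hcpos : 0 < c := by
        have : ∃ i, v i ≠ 0 := by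
          by_contra hcon
          push_neg at hcon
          exact hv (funext fun i => hcon i)
        obtain ⟨i, hi⟩ := this
        have h1 : 0 < ‖v i‖ ^ 2 := pow_pos (norm_pos_iff.mpr hi) 2
        have h2 : ‖v i‖ ^ 2 ≤ c := by
          rw [hc]
          exact Finset.single_le_sum (f := fun i => ‖v i‖ ^ 2)
            (fun i _ => by positivity) (Finset.mem_univ i)
        linarith
      set t : ℝ := Real.sqrt c with ht
      have htpos : 0 < t := Real.sqrt_pos.mpr hcpos
      have ht2 : t ^ 2 = c := Real.sq_sqrt hcpos.le
      have hunit : ∑ i, ‖(((t : ℂ))⁻¹ • v) i‖ ^ 2 = 1 := by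
        simp only [Pi.smul_apply, smul_eq_mul, norm_mul, mul_pow, norm_inv,
          Complex.norm_real, Real.norm_eq_abs, abs_of_pos htpos]
        rw [← Finset.mul_sum, ← hc, inv_pow, ht2, inv_mul_cancel₀ hcpos.ne']
      have := h _ hunit
      rw [mulVec_smul] at this
      simp only [Pi.smul_apply, smul_eq_mul, norm_mul, mul_pow, norm_inv,
        Complex.norm_real, Real.norm_eq_abs, abs_of_pos htpos] at this
      rw [← Finset.mul_sum] at this
      field_simp at this
      rw [this, ht2, mul_comm]
  have hzero : ∀ v : n → ℂ, star v ⬝ᵥ ((Aᴴ * A - (p : ℂ) • 1) *ᵥ v) = 0 := by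
    intro v
    rw [sub_mulVec, dotProduct_sub, dot_conj, stardot, hscale v, smul_mulVec,
      one_mulVec, dotProduct_smul, stardot, smul_eq_mul]
    push_cast
    ring
  have := polar _ hzero
  rw [sub_eq_zero] at this
  exact this

lemma combineXY (X Y O : Matrix n n ℂ) (p q : ℂ)
    (h1 : (1/2 : ℂ) • X + (1/2 : ℂ) • Y = p • O)
    (h2 : (Complex.I/2) • X - (Complex.I/2) • Y = q • O) :
    X = (p - Complex.I * q) • O := by
  have h2' := congrArg (fun M => (-Complex.I) • M) h2
  simp only [smul_sub, smul_smul] at h2'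
  rw [show -Complex.I * (Complex.I/2) = (1/2 : ℂ) by
    rw [div_eq_mul_inv, ← mul_assoc, neg_mul, Complex.I_mul_I]; ring] at h2'
  linear_combination (norm := module) h1 + h2'

lemma expandCT (a b : ℂ) (A B : Matrix n n ℂ) :
    (a • A + b • B)ᴴ * (a • A + b • B)
      = (star a * a) • (Aᴴ * A) + (star a * b) • (Aᴴ * B)
        + (star b * a) • (Bᴴ * A) + (star b * b) • (Bᴴ * B) := by
  simp only [conjTranspose_add, conjTranspose_smul, add_mul, mul_add, smul_mul_assoc,
    mul_smul_comm, smul_smul]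
  module

lemma rowSum_one {m : Type*} [Fintype m] [DecidableEq m] (K : m → Matrix n n ℂ) (k : m) :
    ∑ t, ((1 : Matrix m m ℂ) k t) • K t = K k := by
  simp [Matrix.one_apply, ite_smul]

end helpers

section twoVsec
variable {m : Type*} [Fintype m] [DecidableEq m]

def twoV (j l : m) (a b : ℂ) : Matrix m m ℂ := fun x y =>
  if x = j then (if y = j then a else if y = l then b else 0)
  else if x = l then (if y = j then -(starRingEnd ℂ b) else if y = l then starRingEnd ℂ a else 0)
  else if x = y then 1 else 0

lemma twoV_mem (j l : m) (hjl : j ≠ l) (a b : ℂ)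
    (hab : (starRingEnd ℂ a) * a + (starRingEnd ℂ b) * b = 1) :
    twoV j l a b ∈ Matrix.unitaryGroup m ℂ := by
  rw [Matrix.mem_unitaryGroup_iff']
  ext x y
  rw [Matrix.mul_apply]
  set V := twoV j l a b with hV
  set S := (Finset.univ.erase j).erase l with hS
  have hsplit : ∀ f : m → ℂ, ∑ t, f t = f j + f l + ∑ t ∈ S, f t := by
    intro f
    rw [add_assoc, Finset.add_sum_erase _ f (by simp [hjl.symm] : l ∈ Finset.univ.erase j),
      Finset.add_sum_erase _ f (Finset.mem_univ j)]
  rw [hsplit]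
  have hrest : ∑ t ∈ S, (star V) x t * V t y
      = if x ∈ S then (if x = y then (1:ℂ) else 0) else 0 := by
    rw [Finset.sum_congr rfl (fun t ht => ?_), Finset.sum_ite_eq' S x
      (fun t => if t = y then (1:ℂ) else 0)]
    have htj : t ≠ j := by simp [hS] at ht; exact ht.2
    have htl : t ≠ l := by simp [hS] at ht; exact ht.1
    simp only [Matrix.star_apply, hV, twoV, htj, htl, if_false]
    by_cases htx : t = x <;> by_cases hty : t = y <;>
      simp [htx, hty]
  rw [hrest]
  by_cases hx : x = j <;> by_cases hy : y = j
  · subst hx; subst hy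
    simp [hV, twoV, hjl, hjl.symm, hS, Matrix.one_apply, Matrix.star_apply]
    linear_combination hab
  · by_cases hyl : y = l
    · subst hx; subst hyl
      simp [hV, twoV, hjl, hjl.symm, hS, Matrix.one_apply, Matrix.star_apply]
      ring
    · subst hx
      simp [hV, twoV, hjl, hjl.symm, hy, hyl, hS, Matrix.one_apply, Matrix.star_apply,
        Ne.symm hy]
  · by_cases hxl : x = l
    · subst hxl; subst hy
      simp [hV, twoV, hjl, hjl.symm, hS, Matrix.one_apply, Matrix.star_apply]
      ring
    · subst hy
      simp [hV, twoV, hjl, hjl.symm, hx, hxl, hS, Matrix.one_apply, Matrix.star_apply,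
        Ne.symm hx]
  · by_cases hxl : x = l <;> by_cases hyl : y = l
    · subst hxl; subst hyl
      simp [hV, twoV, hjl, hjl.symm, hS, Matrix.one_apply, Matrix.star_apply]
      linear_combination hab
    · subst hxl
      simp [hV, twoV, hjl, hjl.symm, hy, hyl, hS, Matrix.one_apply, Matrix.star_apply,
        Ne.symm hyl]
    · subst hyl
      simp [hV, twoV, hjl, hjl.symm, hx, hxl, hS, Matrix.one_apply, Matrix.star_apply,
        Ne.symm hxl]
    · simp [hV, twoV, hjl, hjl.symm, hx, hxl, hy, hyl, hS, Matrix.one_apply,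
        Matrix.star_apply]

lemma twoV_row {n : Type*} [Fintype n] [DecidableEq n] (j l : m) (hjl : j ≠ l) (a b : ℂ)
    (K : m → Matrix n n ℂ) :
    ∑ t, (twoV j l a b) j t • K t = a • K j + b • K l := by
  have : ∀ t, (twoV j l a b) j t • K t
      = (if t = j then a • K j else 0) + (if t = l then b • K l else 0) := by
    intro t
    by_cases h1 : t = j
    · subst h1; simp [twoV, hjl, Ne.symm hjl]
    · by_cases h2 : t = l
      · subst h2; simp [twoV, hjl, Ne.symm hjl, h1]
      · simp [twoV, h1, h2, Ne.symm h1, Ne.symm h2]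
  rw [Finset.sum_congr rfl (fun t _ => this t), Finset.sum_add_distrib,
    Finset.sum_ite_eq' _ j (fun _ => a • K j), Finset.sum_ite_eq' _ l (fun _ => b • K l)]
  simp

end twoVsec

theorem stmt_1 {n m : Type*} [Fintype n] [DecidableEq n] [Nonempty n]
    [Fintype m] [DecidableEq m] [Nonempty m]
    (K : m → Matrix n n ℂ)
    (hiso : ∑ j, (K j)ᴴ * K j = (1 : Matrix n n ℂ))
    (hinfo : ∀ V ∈ Matrix.unitaryGroup m ℂ, ∀ k : m, ∃ p : ℝ,
      ∀ r : n → ℂ, (∑ i, ‖r i‖ ^ 2 = 1) →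
        ∑ i, ‖((∑ j, V k j • K j).mulVec r) i‖ ^ 2 = p) :
    ∃ U ∈ Matrix.unitaryGroup n ℂ, ∃ c : m → ℂ, ∀ j, K j = c j • U := by
  classical
  have hQ : ∀ V ∈ Matrix.unitaryGroup m ℂ, ∀ k : m, ∃ p : ℝ,
      (∑ j, V k j • K j)ᴴ * (∑ j, V k j • K j) = (p : ℂ) • 1 := by
    intro V hV k
    obtain ⟨p, hp⟩ := hinfo V hV k
    exact ⟨p, quad_to_scalar _ p hp⟩
  have hdiag : ∀ k, ∃ p : ℝ, (K k)ᴴ * K k = (p : ℂ) • 1 := by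
    intro k
    obtain ⟨p, hp⟩ := hQ 1 (one_mem _) k
    rw [rowSum_one] at hp
    exact ⟨p, hp⟩
  choose p hp using hdiag
  -- the 1/√2 scalar
  set s : ℝ := (Real.sqrt 2)⁻¹ with hsdef
  have hss : (s : ℂ) * (s : ℂ) = 1/2 := by
    have : s * s = 1/2 := by
      rw [hsdef, ← mul_inv, Real.mul_self_sqrt (by norm_num)]
      norm_num
    calc (s : ℂ) * (s : ℂ) = ((s * s : ℝ) : ℂ) := by push_cast; ring
    _ = 1/2 := by rw [this]; norm_num
  have hstar : star ((s : ℂ)) = (s : ℂ) := by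
    simp [Complex.star_def, Complex.conj_ofReal]
  have hcross : ∀ j l : m, ∃ c : ℂ, (K j)ᴴ * K l = c • 1 := by
    intro j l
    by_cases hjl : j = l
    · exact ⟨p l, by rw [hjl]; exact hp l⟩
    · have hab1 : (starRingEnd ℂ) ((s:ℂ)) * (s:ℂ) + (starRingEnd ℂ) ((s:ℂ)) * (s:ℂ) = 1 := by
        rw [Complex.conj_ofReal]
        linear_combination 2 * hss
      have hab2 : (starRingEnd ℂ) ((s:ℂ)) * (s:ℂ)
          + (starRingEnd ℂ) ((s:ℂ) * Complex.I) * ((s:ℂ) * Complex.I) = 1 := by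
        simp only [_root_.map_mul, Complex.conj_ofReal, Complex.conj_I]
        linear_combination 2 * hss - ((s:ℂ) * (s:ℂ)) * Complex.I_mul_I
      obtain ⟨p1, hp1⟩ := hQ (twoV j l (s:ℂ) (s:ℂ)) (twoV_mem j l hjl _ _ hab1) j
      obtain ⟨p2, hp2⟩ := hQ (twoV j l (s:ℂ) ((s:ℂ) * Complex.I))
        (twoV_mem j l hjl _ _ hab2) j
      rw [twoV_row j l hjl] at hp1 hp2
      rw [expandCT, hp j, hp l, hstar, hss] at hp1
      have d2 : star ((s:ℂ)) * ((s:ℂ) * Complex.I) = Complex.I/2 := by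
        rw [hstar, ← mul_assoc, hss]; ring
      have d3 : star ((s:ℂ) * Complex.I) * ((s:ℂ)) = -(Complex.I/2) := by
        simp only [star_mul', Complex.star_def, Complex.conj_ofReal, Complex.conj_I]
        linear_combination -Complex.I * hss
      have d4 : star ((s:ℂ) * Complex.I) * ((s:ℂ) * Complex.I) = 1/2 := by
        simp only [star_mul', Complex.star_def, Complex.conj_ofReal, Complex.conj_I]
        linear_combination hss - ((s:ℂ) * (s:ℂ)) * Complex.I_mul_I
      rw [expandCT, hp j, hp l, d2, d3, d4, hstar, hss] at hp2
      have h1 : (1/2 : ℂ) • ((K j)ᴴ * K l) + (1/2 : ℂ) • ((K l)ᴴ * K j)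
          = ((p1 : ℂ) - (p j : ℂ)/2 - (p l : ℂ)/2) • (1 : Matrix n n ℂ) := by
        linear_combination (norm := module) hp1
      have h2 : (Complex.I/2) • ((K j)ᴴ * K l) - (Complex.I/2) • ((K l)ᴴ * K j)
          = ((p2 : ℂ) - (p j : ℂ)/2 - (p l : ℂ)/2) • (1 : Matrix n n ℂ) := by
        linear_combination (norm := module) hp2
      exact ⟨_, combineXY _ _ _ _ _ h1 h2⟩
  -- find an index with positive weight
  obtain ⟨i0⟩ := (inferInstance : Nonempty n)
  have hpsum : (∑ j, p j) = 1 := by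
    have hmat : ∑ j, ((p j : ℂ)) • (1 : Matrix n n ℂ) = 1 := by
      have : ∑ j, ((p j : ℂ)) • (1 : Matrix n n ℂ) = ∑ j, (K j)ᴴ * K j :=
        Finset.sum_congr rfl fun j _ => (hp j).symm
      rw [this, hiso]
    have := congrArg (fun M => M i0 i0) hmat
    simp only [Matrix.sum_apply, Matrix.smul_apply, Matrix.one_apply_eq, smul_eq_mul,
      mul_one] at this
    exact_mod_cast this
  have hnn : ∀ j, 0 ≤ p j := by
    intro j
    have hd := congrArg (fun M => M i0 i0) (hp j)
    simp only [Matrix.smul_apply, Matrix.one_apply_eq, smul_eq_mul, mul_one] at hd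
    have hform : ((K j)ᴴ * K j) i0 i0
        = star (fun t => K j t i0) ⬝ᵥ (fun t => K j t i0) := by
      simp [Matrix.mul_apply, Matrix.conjTranspose_apply, dotProduct]
    rw [hform, stardot] at hd
    have : p j = ∑ t, ‖K j t i0‖ ^ 2 := by exact_mod_cast hd.symm
    rw [this]
    positivity
  have hex : ∃ j0, p j0 ≠ 0 := by
    by_contra hcon
    push_neg at hcon
    rw [Finset.sum_congr rfl (fun j _ => hcon j)] at hpsum
    simp at hpsum
  obtain ⟨j0, hj0⟩ := hex
  have hpos : 0 < p j0 := lt_of_le_of_ne (hnn j0) (Ne.symm hj0)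
  set t0 : ℝ := Real.sqrt (p j0) with ht0def
  have ht0pos : 0 < t0 := Real.sqrt_pos.mpr hpos
  have ht0ne : (t0 : ℂ) ≠ 0 := by exact_mod_cast ht0pos.ne'
  have ht02 : (t0 : ℂ) * (t0 : ℂ) = (p j0 : ℂ) := by
    have : t0 * t0 = p j0 := Real.mul_self_sqrt hpos.le
    exact_mod_cast congrArg Complex.ofReal this
  have hstart0 : star ((t0 : ℂ)⁻¹) = (t0 : ℂ)⁻¹ := by
    simp [Complex.star_def, map_inv₀, Complex.conj_ofReal]
  set U : Matrix n n ℂ := ((t0 : ℂ))⁻¹ • K j0 with hUdef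
  have hUU : Uᴴ * U = 1 := by
    rw [hUdef, conjTranspose_smul, smul_mul_assoc, mul_smul_comm, smul_smul, hp j0,
      smul_smul, hstart0]
    rw [show (t0:ℂ)⁻¹ * (t0:ℂ)⁻¹ * (p j0 : ℂ) = 1 by
      rw [← ht02]; field_simp]
    rw [one_smul]
  have hUmem : U ∈ Matrix.unitaryGroup n ℂ := Matrix.mem_unitaryGroup_iff'.mpr hUU
  have hU2 : U * Uᴴ = 1 := Matrix.mem_unitaryGroup_iff.mp hUmem
  choose cc hcc using hcross j0
  refine ⟨U, hUmem, fun t => (t0 : ℂ)⁻¹ * cc t, fun t => ?_⟩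
  have hKt : Uᴴ * K t = ((t0 : ℂ)⁻¹ * cc t) • 1 := by
    rw [hUdef, conjTranspose_smul, smul_mul_assoc, hcc t, smul_smul, hstart0]
  calc K t = (U * Uᴴ) * K t := by rw [hU2, one_mul]
  _ = U * (Uᴴ * K t) := by rw [mul_assoc]
  _ = U * (((t0 : ℂ)⁻¹ * cc t) • 1) := by rw [hKt]
  _ = ((t0 : ℂ)⁻¹ * cc t) • U := by
      rw [mul_smul_comm, mul_one]
end

section
/- Let G be a finite group, μ : G → G → ℂ a factor system (|μ(f,g)| = 1 for all f,g; μ(e,f) = μ(f,e) = 1; and μ(h,f)μ(hf,g) = μ(h,fg)μ(f,g) for all f,g,h), let A be a nonempty finite index type, and let U : G → Matrix A A ℂ be a projective unitary representation of G with factor system μ, i.e., each U(f) is unitary, U(e) = I, and U(f)·U(g) = μ(f,g) • U(fg) for all f,g ∈ G. Let B be a nonempty finite index type and W : G → Matrix B B ℂ a family of matrices satisfying, for every g ∈ G, Σ_{f∈G} conj(μ(f,g)) • ((W f)† · W(fg)) = (if g = e then I else 0). Then 𝒰 := Σ_{f∈G} (U f) ⊗ (W f) is a unitary matrix on ℂ^(A×B).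 -/
open Matrix Kronecker

lemma kron_conjT {A B : Type*} [Fintype A] [Fintype B]
    (M : Matrix A A ℂ) (N : Matrix B B ℂ) :
    (M ⊗ₖ N)ᴴ = Mᴴ ⊗ₖ Nᴴ := by
  ext ⟨a, b⟩ ⟨c, d⟩
  simp [Matrix.conjTranspose_apply, Matrix.kroneckerMap_apply]

lemma kron_sum_right {G A B : Type*} [Fintype G] [Fintype A] [Fintype B]
    (M : Matrix A A ℂ) (N : G → Matrix B B ℂ) :
    M ⊗ₖ (∑ f : G, N f) = ∑ f : G, M ⊗ₖ (N f) := by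
  ext ⟨a, b⟩ ⟨c, d⟩
  simp [Matrix.kroneckerMap_apply, Matrix.sum_apply, Finset.mul_sum]

theorem stmt_4 {G : Type*} [Group G] [Fintype G] [DecidableEq G]
    (μ : G → G → ℂ)
    (hμabs : ∀ f g : G, ‖μ f g‖ = 1)
    (hμel : ∀ f : G, μ 1 f = 1) (hμer : ∀ f : G, μ f 1 = 1)
    (hμc : ∀ f g h : G, μ h f * μ (h * f) g = μ h (f * g) * μ f g)
    {A : Type*} [Fintype A] [DecidableEq A] [Nonempty A]
    (U : G → Matrix A A ℂ)
    (hUu : ∀ f : G, U f ∈ Matrix.unitaryGroup A ℂ)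
    (hUe : U 1 = 1)
    (hUm : ∀ f g : G, U f * U g = μ f g • U (f * g))
    {B : Type*} [Fintype B] [DecidableEq B] [Nonempty B]
    (W : G → Matrix B B ℂ)
    (hW : ∀ g : G, ∑ f : G, star (μ f g) • ((W f)ᴴ * W (f * g))
        = if g = 1 then (1 : Matrix B B ℂ) else 0) :
    (∑ f : G, (U f) ⊗ₖ (W f)) ∈ Matrix.unitaryGroup (A × B) ℂ := by
  rw [Matrix.mem_unitaryGroup_iff']
  have hμone : ∀ f g : G, star (μ f g) * μ f g = 1 := by
    intro f g
    have h := Complex.normSq_eq_norm_sq (μ f g)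
    rw [hμabs] at h
    have h2 := Complex.mul_conj (μ f g)
    rw [h] at h2
    push_cast at h2
    rw [mul_comm] at h2
    simpa using h2
  have key : ∀ f h : G, (U f)ᴴ * U (f * h) = star (μ f h) • U h := by
    intro f h
    have hU1 : (U f)ᴴ * U f = 1 := Matrix.mem_unitaryGroup_iff'.mp (hUu f)
    calc (U f)ᴴ * U (f * h)
        = (star (μ f h) * μ f h) • ((U f)ᴴ * U (f * h)) := by
          rw [hμone, one_smul]
      _ = star (μ f h) • ((U f)ᴴ * (μ f h • U (f * h))) := by
          rw [mul_smul, Matrix.mul_smul]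
      _ = star (μ f h) • ((U f)ᴴ * (U f * U h)) := by rw [hUm]
      _ = star (μ f h) • U h := by rw [← mul_assoc, hU1, one_mul]
  have expand : star (∑ f : G, (U f) ⊗ₖ (W f)) * (∑ g : G, (U g) ⊗ₖ (W g))
      = ∑ f : G, ∑ g : G, ((U f)ᴴ * U g) ⊗ₖ ((W f)ᴴ * W g) := by
    rw [Matrix.star_eq_conjTranspose, Matrix.conjTranspose_sum, Finset.sum_mul_sum]
    refine Finset.sum_congr rfl fun f _ => Finset.sum_congr rfl fun g _ => ?_
    rw [kron_conjT, Matrix.mul_kronecker_mul]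
  rw [expand]
  calc ∑ f : G, ∑ g : G, ((U f)ᴴ * U g) ⊗ₖ ((W f)ᴴ * W g)
      = ∑ f : G, ∑ h : G, ((U f)ᴴ * U (f * h)) ⊗ₖ ((W f)ᴴ * W (f * h)) := by
        refine Finset.sum_congr rfl fun f _ => ?_
        exact (Fintype.sum_equiv (Equiv.mulLeft f) _ _ fun h => rfl).symm
    _ = ∑ h : G, ∑ f : G, (U h) ⊗ₖ (star (μ f h) • ((W f)ᴴ * W (f * h))) := by
        rw [Finset.sum_comm]
        refine Finset.sum_congr rfl fun h _ => Finset.sum_congr rfl fun f _ => ?_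
        rw [key, Matrix.smul_kronecker, Matrix.kronecker_smul]
    _ = ∑ h : G, (U h) ⊗ₖ (∑ f : G, star (μ f h) • ((W f)ᴴ * W (f * h))) := by
        refine Finset.sum_congr rfl fun h _ => (kron_sum_right _ _).symm
    _ = ∑ h : G, (U h) ⊗ₖ (if h = 1 then (1 : Matrix B B ℂ) else 0) := by
        refine Finset.sum_congr rfl fun h _ => by rw [hW]
    _ = 1 := by
        rw [Finset.sum_eq_single 1]
        · simp [hUe, Matrix.one_kronecker_one]
        · intro b _ hb
          simp [hb]
        · simp
end

section
/- Let G be a finite group, μ : G → G → ℂ a factor system (|μ(f,g)| = 1 for all f,g; μ(e,f) = μ(f,e) = 1; and μ(h,f)μ(hf,g) = μ(h,fg)μ(f,g) for all f,g,h), A a nonempty finite index type, and U : G → Matrix A A ℂ a projective unitary representation of G with factor system μ. Let B be a nonempty finite index type and W : G → Matrix B B ℂ. Suppose that the family (U f)_{f∈G} is linearly independent in the ℂ-vector space of A × A matrices, and that 𝒰 := Σ_{f∈G} (U f) ⊗ (W f) is unitary. Then for every g ∈ G, Σ_{f∈G} conj(μ(f,g)) • ((W f)† · W(fg)) = (if g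 = e then I else 0). -/
open Matrix Kronecker

lemma star_kron {A B : Type*} [Fintype A] [Fintype B]
    (X : Matrix A A ℂ) (Y : Matrix B B ℂ) :
    (X ⊗ₖ Y)ᴴ = Xᴴ ⊗ₖ Yᴴ := by
  ext ⟨a, b⟩ ⟨a', b'⟩
  simp [Matrix.conjTranspose_apply, Matrix.kroneckerMap_apply]

lemma kron_sum {A B I : Type*} [Fintype A] [Fintype B] [Fintype I]
    (X : Matrix A A ℂ) (M : I → Matrix B B ℂ) :
    X ⊗ₖ (∑ i, M i) = ∑ i, X ⊗ₖ (M i) := by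
  ext ⟨a, b⟩ ⟨a', b'⟩
  simp [Matrix.kroneckerMap_apply, Matrix.sum_apply, Finset.mul_sum]

theorem stmt_5 {G : Type*} [Group G] [Fintype G] [DecidableEq G]
    (μ : G → G → ℂ)
    (hμabs : ∀ f g : G, ‖μ f g‖ = 1)
    (hμel : ∀ f : G, μ 1 f = 1) (hμer : ∀ f : G, μ f 1 = 1)
    (hμc : ∀ f g h : G, μ h f * μ (h * f) g = μ h (f * g) * μ f g)
    {A : Type*} [Fintype A] [DecidableEq A] [Nonempty A]
    (U : G → Matrix A A ℂ)
    (hUu : ∀ f : G, U f ∈ Matrix.unitaryGroup A ℂ)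
    (hUe : U 1 = 1)
    (hUm : ∀ f g : G, U f * U g = μ f g • U (f * g))
    (hUli : LinearIndependent ℂ U)
    {B : Type*} [Fintype B] [DecidableEq B] [Nonempty B]
    (W : G → Matrix B B ℂ)
    (h𝒰 : (∑ f : G, (U f) ⊗ₖ (W f)) ∈ Matrix.unitaryGroup (A × B) ℂ) :
    ∀ g : G, ∑ f : G, star (μ f g) • ((W f)ᴴ * W (f * g))
      = if g = 1 then (1 : Matrix B B ℂ) else 0 := by
  have hstar : ∀ f h : G, star (μ f h) * μ f h = 1 := by
    intro f h
    have : (starRingEnd ℂ) (μ f h) * μ f h = 1 := by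
      rw [mul_comm, Complex.mul_conj, ← Complex.sq_norm, hμabs]; norm_num
    exact this
  have hkey : ∀ f h : G, (U f)ᴴ * U (f * h) = star (μ f h) • U h := by
    intro f h
    have h1 : (U f)ᴴ * U f = 1 := by
      have := (hUu f).1
      rwa [Matrix.star_eq_conjTranspose] at this
    calc (U f)ᴴ * U (f * h)
        = star (μ f h) • ((U f)ᴴ * (μ f h • U (f * h))) := by
          rw [Matrix.mul_smul, smul_smul, hstar, one_smul]
      _ = star (μ f h) • ((U f)ᴴ * (U f * U h)) := by rw [← hUm]
      _ = star (μ f h) • U h := by rw [← mul_assoc, h1, one_mul]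
  set M : G → Matrix B B ℂ :=
    fun h => ∑ f : G, star (μ f h) • ((W f)ᴴ * W (f * h)) with hMdef
  have hmain : ∑ h : G, (U h) ⊗ₖ (M h) = (U 1) ⊗ₖ (1 : Matrix B B ℂ) := by
    have h1 : star (∑ f : G, (U f) ⊗ₖ (W f)) * (∑ f : G, (U f) ⊗ₖ (W f)) = 1 :=
      h𝒰.1
    have h2 : star (∑ f : G, (U f) ⊗ₖ (W f)) = ∑ f : G, (U f)ᴴ ⊗ₖ (W f)ᴴ := by
      rw [Matrix.star_eq_conjTranspose, Matrix.conjTranspose_sum]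
      exact Finset.sum_congr rfl fun f _ => star_kron _ _
    rw [h2, Finset.sum_mul_sum] at h1
    have h3 : ∀ f : G, ∑ f' : G, ((U f)ᴴ ⊗ₖ (W f)ᴴ) * ((U f') ⊗ₖ (W f'))
        = ∑ h : G, star (μ f h) • ((U h) ⊗ₖ ((W f)ᴴ * W (f * h))) := by
      intro f
      rw [← Fintype.sum_equiv (Equiv.mulLeft f)
        (fun h => ((U f)ᴴ ⊗ₖ (W f)ᴴ) * ((U (f * h)) ⊗ₖ (W (f * h))))
        (fun f' => ((U f)ᴴ ⊗ₖ (W f)ᴴ) * ((U f') ⊗ₖ (W f'))) (fun h => rfl)]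
      refine Finset.sum_congr rfl fun h _ => ?_
      rw [← Matrix.mul_kronecker_mul, hkey, Matrix.smul_kronecker]
    simp_rw [h3] at h1
    rw [Finset.sum_comm] at h1
    have h4 : ∀ h : G, ∑ f : G, star (μ f h) • ((U h) ⊗ₖ ((W f)ᴴ * W (f * h)))
        = (U h) ⊗ₖ (M h) := by
      intro h
      rw [hMdef, kron_sum]
      exact Finset.sum_congr rfl fun f _ => by rw [Matrix.kronecker_smul]
    simp_rw [h4] at h1
    rw [h1, hUe, Matrix.one_kronecker_one]
  intro g
  show M g = _
  ext b b'
  have hent : ∀ a a' : A, ∑ h : G, U h a a' * M h b b'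
      = U 1 a a' * (1 : Matrix B B ℂ) b b' := by
    intro a a'
    have := congrFun (congrFun hmain (a, b)) (a', b')
    simpa [Matrix.sum_apply, Matrix.kroneckerMap_apply] using this
  have hc := Fintype.linearIndependent_iff.mp hUli
    (fun h => M h b b' - if h = 1 then (1 : Matrix B B ℂ) b b' else 0) ?_ g
  · have : M g b b' = if g = 1 then (1 : Matrix B B ℂ) b b' else 0 := by
      linear_combination hc
    rw [this]
    by_cases hg : g = 1 <;> simp [hg]
  · ext a a'
    simp only [Matrix.sum_apply, Matrix.smul_apply, Matrix.zero_apply, smul_eq_mul]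
    have : ∑ h : G, (M h b b' - if h = 1 then (1 : Matrix B B ℂ) b b' else 0) * U h a a'
        = (∑ h : G, U h a a' * M h b b') - (1 : Matrix B B ℂ) b b' * U 1 a a' := by
      simp_rw [sub_mul]; rw [Finset.sum_sub_distrib]
      congr 1
      · exact Finset.sum_congr rfl fun h _ => mul_comm _ _
      · rw [Finset.sum_eq_single 1] <;> simp +contextual
    rw [this, hent, mul_comm, sub_self]
end

section
/- Let G be a finite group, μ : G → G → ℂ a factor system (|μ(f,g)| = 1 for all f,g; μ(e,f) = μ(f,e) = 1; and μ(h,f)μ(hf,g) = μ(h,fg)μ(f,g) for all f,g,h), B a nonempty finite index type, and W : G → Matrix B B ℂ. Define the projective regular representation R : G → Matrix G G ℂ by R(f)(g,k) = μ(g,f) if k = g·f and 0 otherwise, and set M := Σ_{f∈G} (R f) ⊗ (W f), a matrix indexed by G × B. Then M is unitary if and only if for every g ∈ G, Σ_{f∈G} conj(μ(f,g)) • ((W f)† · W(fg)) = (if g = e then I else 0). -/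
open Matrix Kronecker

theorem stmt_6 {G : Type*} [Group G] [Fintype G] [DecidableEq G]
    (μ : G → G → ℂ)
    (hμabs : ∀ f g : G, ‖μ f g‖ = 1)
    (hμel : ∀ f : G, μ 1 f = 1) (hμer : ∀ f : G, μ f 1 = 1)
    (hμc : ∀ f g h : G, μ h f * μ (h * f) g = μ h (f * g) * μ f g)
    {B : Type*} [Fintype B] [DecidableEq B] [Nonempty B]
    (W : G → Matrix B B ℂ)
    (R : G → Matrix G G ℂ)
    (hR : ∀ f g k : G, R f g k = if k = g * f then μ g f else 0) :
    (∑ f : G, (R f) ⊗ₖ (W f)) ∈ Matrix.unitaryGroup (G × B) ℂ ↔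
      ∀ g : G, ∑ f : G, star (μ f g) • ((W f)ᴴ * W (f * g))
        = if g = 1 then (1 : Matrix B B ℂ) else 0 := by
  set M := ∑ f : G, (R f) ⊗ₖ (W f) with hM
  have hunit : ∀ x y : G, star (μ x y) * μ x y = 1 := by
    intro x y
    rw [Complex.star_def, mul_comm, Complex.mul_conj]
    rw [Complex.normSq_eq_norm_sq, hμabs]
    norm_num
  have hMe : ∀ (h : G) (c : B) (g : G) (a : B),
      M (h, c) (g, a) = μ h (h⁻¹ * g) * W (h⁻¹ * g) c a := by
    intro h c g a
    rw [hM, Matrix.sum_apply]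
    rw [Finset.sum_eq_single (h⁻¹ * g)]
    · simp [Matrix.kroneckerMap_apply, hR, mul_inv_cancel_left]
    · intro f _ hf
      simp only [Matrix.kroneckerMap_apply, hR]
      rw [if_neg, zero_mul]
      intro hgf
      exact hf (by rw [hgf]; group)
    · simp
  have key : ∀ (g k : G) (a b : B),
      (star M * M) (g, a) (k, b)
        = μ g (g⁻¹ * k) * ∑ f : G, star (μ f (g⁻¹ * k)) *
            ((W f)ᴴ * W (f * (g⁻¹ * k))) a b := by
    intro g k a b
    rw [Matrix.mul_apply, Fintype.sum_prod_type]
    have hinner : ∀ h : G, ∑ c : B, (star M) (g, a) (h, c) * M (h, c) (k, b)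
        = (star (μ h (h⁻¹ * g)) * μ h (h⁻¹ * k)) *
            ((W (h⁻¹ * g))ᴴ * W (h⁻¹ * k)) a b := by
      intro h
      rw [Matrix.mul_apply, Finset.mul_sum]
      refine Finset.sum_congr rfl fun c _ => ?_
      rw [Matrix.star_apply, hMe, hMe, Matrix.conjTranspose_apply]
      ring_nf
      simp only [star_mul']
      ring
    simp only [hinner]
    rw [Finset.mul_sum]
    refine Fintype.sum_equiv ((Equiv.inv G).trans (Equiv.mulRight g)) _ _ fun f => ?_
    have e1 : ((Equiv.inv G).trans (Equiv.mulRight g)) f = f⁻¹ * g := rfl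
    rw [e1]
    have e3 : f⁻¹ * g * (g⁻¹ * k) = f⁻¹ * k := by group
    rw [e3]
    have hscal : star (μ f (f⁻¹ * g)) * μ f (f⁻¹ * k)
        = μ g (g⁻¹ * k) * star (μ (f⁻¹ * g) (g⁻¹ * k)) := by
      have C := hμc (f⁻¹ * g) (g⁻¹ * k) f
      have e4 : f * (f⁻¹ * g) = g := by group
      rw [e4, e3] at C
      have h1 := hunit f (f⁻¹ * g)
      have h2 := hunit (f⁻¹ * g) (g⁻¹ * k)
      set A := μ f (f⁻¹ * g)
      set N := μ f (f⁻¹ * k)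
      set Bv := μ (f⁻¹ * g) (g⁻¹ * k)
      set s := μ g (g⁻¹ * k)
      calc star A * N = star A * N * (star Bv * Bv) := by rw [h2, mul_one]
        _ = star A * (N * Bv) * star Bv := by ring
        _ = star A * (A * s) * star Bv := by rw [← C]
        _ = (star A * A) * s * star Bv := by ring
        _ = s * star Bv := by rw [h1]; ring
    rw [hscal]
    ring
  constructor
  · intro hU g
    have h1 : star M * M = 1 := Matrix.mem_unitaryGroup_iff'.mp hU
    ext a b
    have hk := key 1 g a b
    rw [h1] at hk
    simp only [inv_one, one_mul, hμel, one_mul] at hk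
    rw [Matrix.sum_apply]
    simp only [Matrix.smul_apply, smul_eq_mul]
    rw [← hk]
    rw [Matrix.one_apply]
    by_cases hg : g = 1
    · subst hg
      simp [Matrix.one_apply]
    · rw [if_neg hg]
      rw [if_neg (by simp [Ne.symm hg])]
      simp
  · intro hcond
    rw [Matrix.mem_unitaryGroup_iff']
    ext ⟨g, a⟩ ⟨k, b⟩
    rw [key]
    have hc := congrArg (fun m => m a b) (hcond (g⁻¹ * k))
    simp only [Matrix.sum_apply, Matrix.smul_apply, smul_eq_mul] at hc
    rw [hc]
    by_cases hgk : g⁻¹ * k = 1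
    · have : k = g := by
        have := hgk
        group at this ⊢
        rw [inv_mul_eq_one] at hgk
        exact hgk.symm
      subst this
      simp [hμer, Matrix.one_apply, hgk]
    · rw [if_neg hgk]
      have hne : (g, a) ≠ (k, b) := by
        intro h
        rw [Prod.mk.injEq] at h
        exact hgk (by rw [h.1]; simp)
      simp [Matrix.one_apply, hne]
end

section
/- Let G be a finite group, μ : G → G → ℂ a factor system (|μ(f,g)| = 1 for all f,g; μ(e,f) = μ(f,e) = 1; and μ(h,f)μ(hf,g) = μ(h,fg)μ(f,g) for all f,g,h), A a nonempty finite index type, and U : G → Matrix A A ℂ a projective unitary representation of G with factor system μ. Let B be a nonempty finite index type and W : G → Matrix B B ℂ be such that 𝒰 := Σ_{f∈G} (U f) ⊗ (W f) is unitary. Then there exists a family W' : G → Matrix B B ℂ such that Σ_{f∈G} (U f) ⊗ (W' f) = 𝒰 and, for every g ∈ G, Σ_{f∈G} conj(μ(f,g)) • ((W' f)† · W'(fg)) = (if g = e then I else 0). -/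
open Matrix Kronecker
set_option linter.unusedSectionVars false
set_option maxHeartbeats 1000000

namespace Stmt7
variable {G : Type*} [Group G] [Fintype G] [DecidableEq G]
noncomputable section

def tconv (μ : G → G → ℂ) (x y : G → ℂ) : G → ℂ :=
  fun g => ∑ f, x f * y (f⁻¹ * g) * μ f (f⁻¹ * g)

def tstar (μ : G → G → ℂ) (x : G → ℂ) : G → ℂ :=
  fun g => (starRingEnd ℂ) (x g⁻¹ * μ g⁻¹ g)

def tone : G → ℂ := fun g => if g = 1 then (1 : ℂ) else 0

variable {μ : G → G → ℂ}

lemma mu_conj_mul (hμabs : ∀ f g : G, ‖μ f g‖ = 1) (f g : G) :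
    (starRingEnd ℂ) (μ f g) * μ f g = 1 := by
  rw [mul_comm, Complex.mul_conj]
  norm_cast
  rw [Complex.normSq_eq_norm_sq, hμabs]
  norm_num

lemma mu_ne (hμabs : ∀ f g : G, ‖μ f g‖ = 1) (f g : G) : μ f g ≠ 0 := by
  intro h
  have := hμabs f g
  rw [h] at this
  simp at this

lemma mu_inv_symm (hμer : ∀ f : G, μ f 1 = 1) (hμel : ∀ f : G, μ 1 f = 1)
    (hμc : ∀ f g h : G, μ h f * μ (h * f) g = μ h (f * g) * μ f g) (f : G) :
    μ f f⁻¹ = μ f⁻¹ f := by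
  have := hμc f⁻¹ f f
  simpa [hμel, hμer] using this

/-- μ f⁻¹ (f*g) * μ f g = μ f⁻¹ f -/
lemma mu_I1 (hμel : ∀ f : G, μ 1 f = 1)
    (hμc : ∀ f g h : G, μ h f * μ (h * f) g = μ h (f * g) * μ f g) (f g : G) :
    μ f⁻¹ (f * g) * μ f g = μ f⁻¹ f := by
  have := hμc f g f⁻¹
  simpa [hμel] using this.symm

/-- key identity for star antimultiplicativity -/
lemma mu_star_id (hμer : ∀ f : G, μ f 1 = 1)
    (hμc : ∀ f g h : G, μ h f * μ (h * f) g = μ h (f * g) * μ f g) (a b : G) :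
    μ b b⁻¹ * μ a a⁻¹ = μ a b * μ (a * b) (b⁻¹ * a⁻¹) * μ b⁻¹ a⁻¹ := by
  have E2 := hμc b b⁻¹ a
  have E1 := hμc b⁻¹ a⁻¹ (a * b)
  simp only [mul_inv_cancel, hμer, one_mul, mul_inv_cancel_right] at E2 E1
  calc μ b b⁻¹ * μ a a⁻¹ = (μ a b * μ (a * b) b⁻¹) * μ a a⁻¹ := by rw [E2]
    _ = μ a b * (μ (a * b) b⁻¹ * μ a a⁻¹) := by ring
    _ = μ a b * (μ (a * b) (b⁻¹ * a⁻¹) * μ b⁻¹ a⁻¹) := by rw [E1]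
    _ = _ := by ring



lemma tconv_add_left (x y z : G → ℂ) :
    tconv μ (x + y) z = tconv μ x z + tconv μ y z := by
  funext g
  simp [tconv, add_mul, Finset.sum_add_distrib]

lemma tconv_add_right (x y z : G → ℂ) :
    tconv μ x (y + z) = tconv μ x y + tconv μ x z := by
  funext g
  simp [tconv, mul_add, add_mul, Finset.sum_add_distrib]

lemma tconv_sub_left (x y z : G → ℂ) :
    tconv μ (x - y) z = tconv μ x z - tconv μ y z := by
  funext g
  simp [tconv, sub_mul, Finset.sum_sub_distrib]

lemma tconv_sub_right (x y z : G → ℂ) :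
    tconv μ x (y - z) = tconv μ x y - tconv μ x z := by
  funext g
  simp [tconv, mul_sub, sub_mul, Finset.sum_sub_distrib]

lemma tconv_smul_left (c : ℂ) (x z : G → ℂ) :
    tconv μ (c • x) z = c • tconv μ x z := by
  funext g
  simp only [tconv, Pi.smul_apply, smul_eq_mul, Finset.mul_sum]
  exact Finset.sum_congr rfl fun f _ => by ring

lemma tconv_smul_right (c : ℂ) (x z : G → ℂ) :
    tconv μ x (c • z) = c • tconv μ x z := by
  funext g
  simp only [tconv, Pi.smul_apply, smul_eq_mul, Finset.mul_sum]
  exact Finset.sum_congr rfl fun f _ => by ring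

lemma tconv_sum_right {ι : Type*} (s : Finset ι) (x : G → ℂ)
    (z : ι → (G → ℂ)) :
    tconv μ x (∑ i ∈ s, z i) = ∑ i ∈ s, tconv μ x (z i) := by
  classical
  induction s using Finset.induction_on with
  | empty => funext g; simp [tconv]
  | insert _ _ h ih =>
      rw [Finset.sum_insert h, Finset.sum_insert h, tconv_add_right, ih]

lemma tconv_one_right (hμer : ∀ f : G, μ f 1 = 1) (x : G → ℂ) :
    tconv μ x tone = x := by
  funext g
  rw [show tconv μ x tone g = ∑ f, x f * tone (f⁻¹ * g) * μ f (f⁻¹ * g) from rfl]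
  rw [Finset.sum_eq_single g]
  · simp [tone, hμer]
  · intro f _ hf
    simp [tone, inv_mul_eq_one, hf]
  · intro h; exact absurd (Finset.mem_univ g) h

lemma tconv_one_left (hμel : ∀ f : G, μ 1 f = 1) (x : G → ℂ) :
    tconv μ tone x = x := by
  funext g
  rw [show tconv μ tone x g = ∑ f, tone f * x (f⁻¹ * g) * μ f (f⁻¹ * g) from rfl]
  rw [Finset.sum_eq_single 1]
  · simp [tone, hμel]
  · intro f _ hf
    simp [tone, hf]
  · intro h; exact absurd (Finset.mem_univ 1) h

lemma tconv_assoc (hμc : ∀ f g h : G, μ h f * μ (h * f) g = μ h (f * g) * μ f g)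
    (x y z : G → ℂ) :
    tconv μ (tconv μ x y) z = tconv μ x (tconv μ y z) := by
  funext g
  simp only [tconv, Finset.sum_mul, Finset.mul_sum]
  rw [Finset.sum_comm]
  refine Finset.sum_congr rfl fun k _ => ?_
  rw [← Equiv.sum_comp (Equiv.mulLeft k)
    (fun f => x k * y (k⁻¹ * f) * μ k (k⁻¹ * f) * z (f⁻¹ * g) * μ f (f⁻¹ * g))]
  refine Finset.sum_congr rfl fun m _ => ?_
  simp only [Equiv.coe_mulLeft, inv_mul_cancel_left, _root_.mul_inv_rev, mul_assoc]
  have h := hμc m (m⁻¹ * (k⁻¹ * g)) k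
  rw [mul_inv_cancel_left] at h
  linear_combination (x k * y m * z (m⁻¹ * (k⁻¹ * g))) * h


lemma tstar_add (x y : G → ℂ) : tstar μ (x + y) = tstar μ x + tstar μ y := by
  funext g; simp [tstar, add_mul]

lemma tstar_sub (x y : G → ℂ) : tstar μ (x - y) = tstar μ x - tstar μ y := by
  funext g; simp [tstar, sub_mul]

lemma tstar_smul (c : ℂ) (x : G → ℂ) :
    tstar μ (c • x) = (starRingEnd ℂ) c • tstar μ x := by
  funext g; simp [tstar]; ring

lemma tstar_tone (hμel : ∀ f : G, μ 1 f = 1) :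
    tstar μ (tone (G := G)) = tone := by
  funext g
  simp only [tstar, tone, inv_eq_one]
  split_ifs with h
  · subst h; simp [hμel]
  · simp

lemma tstar_tconv (hμabs : ∀ f g : G, ‖μ f g‖ = 1)
    (hμer : ∀ f : G, μ f 1 = 1)
    (hμc : ∀ f g h : G, μ h f * μ (h * f) g = μ h (f * g) * μ f g)
    (x y : G → ℂ) :
    tstar μ (tconv μ x y) = tconv μ (tstar μ y) (tstar μ x) := by
  funext g
  simp only [tstar, tconv, _root_.map_mul, map_sum, Finset.sum_mul]
  rw [← Equiv.sum_comp (Equiv.mulLeft g)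
    (fun f => (starRingEnd ℂ) (y f⁻¹) * (starRingEnd ℂ) (μ f⁻¹ f) *
      ((starRingEnd ℂ) (x (f⁻¹ * g)⁻¹) * (starRingEnd ℂ) (μ (f⁻¹ * g)⁻¹ (f⁻¹ * g))) *
      μ f (f⁻¹ * g))]
  refine Finset.sum_congr rfl fun m _ => ?_
  simp only [Equiv.coe_mulLeft, _root_.mul_inv_rev, inv_inv, mul_assoc,
    inv_mul_cancel_left, mul_inv_cancel_left, inv_mul_cancel, mul_one]
  have H := mu_star_id hμer hμc m (m⁻¹ * g⁻¹)
  simp only [_root_.mul_inv_rev, inv_inv, mul_inv_cancel_left, mul_inv_cancel_right,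
    mul_assoc, inv_mul_cancel_left, mul_inv_cancel, mul_one] at H
  have Hc := congrArg (starRingEnd ℂ) H
  simp only [_root_.map_mul] at Hc
  have hcm := mu_conj_mul hμabs (g * m) m⁻¹
  linear_combination (-((starRingEnd ℂ) (x m) * (starRingEnd ℂ) (y (m⁻¹ * g⁻¹)) *
      μ (g * m) m⁻¹)) * Hc +
    (-((starRingEnd ℂ) (x m) * (starRingEnd ℂ) (y (m⁻¹ * g⁻¹)) *
      (starRingEnd ℂ) (μ m (m⁻¹ * g⁻¹)) * (starRingEnd ℂ) (μ g⁻¹ g))) * hcm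

section phi
variable {A : Type*} [Fintype A] [DecidableEq A]

def phi (U : G → Matrix A A ℂ) (x : G → ℂ) : Matrix A A ℂ := ∑ g, x g • U g

variable {U : G → Matrix A A ℂ}

lemma phi_add (x y : G → ℂ) : phi U (x + y) = phi U x + phi U y := by
  simp [phi, add_smul, Finset.sum_add_distrib]

lemma phi_sub (x y : G → ℂ) : phi U (x - y) = phi U x - phi U y := by
  simp [phi, sub_smul, Finset.sum_sub_distrib]

lemma phi_smul (c : ℂ) (x : G → ℂ) : phi U (c • x) = c • phi U x := by
  simp [phi, Finset.smul_sum, smul_smul]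

lemma phi_tone (hUe : U 1 = 1) : phi U (tone (G := G)) = 1 := by
  rw [phi, Finset.sum_eq_single 1]
  · simp [tone, hUe]
  · intro f _ hf; simp [tone, hf]
  · intro h; exact absurd (Finset.mem_univ 1) h

lemma U_unit_left (hUu : ∀ f : G, U f ∈ Matrix.unitaryGroup A ℂ) (f : G) :
    (U f)ᴴ * U f = 1 := by
  have := (Unitary.mem_iff.mp (hUu f)).1
  rwa [Matrix.star_eq_conjTranspose] at this

lemma U_unit_right (hUu : ∀ f : G, U f ∈ Matrix.unitaryGroup A ℂ) (f : G) :
    U f * (U f)ᴴ = 1 := by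
  have := (Unitary.mem_iff.mp (hUu f)).2
  rwa [Matrix.star_eq_conjTranspose] at this

lemma U_fg (hμabs : ∀ f g : G, ‖μ f g‖ = 1)
    (hUm : ∀ f g : G, U f * U g = μ f g • U (f * g)) (f g : G) :
    U (f * g) = (starRingEnd ℂ) (μ f g) • (U f * U g) := by
  rw [hUm, smul_smul, mu_conj_mul hμabs, one_smul]

lemma U_adj_mul (hμabs : ∀ f g : G, ‖μ f g‖ = 1)
    (hUu : ∀ f : G, U f ∈ Matrix.unitaryGroup A ℂ)
    (hUm : ∀ f g : G, U f * U g = μ f g • U (f * g)) (f g : G) :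
    (U f)ᴴ * U (f * g) = (starRingEnd ℂ) (μ f g) • U g := by
  rw [U_fg hμabs hUm f g, Matrix.mul_smul, ← Matrix.mul_assoc,
    U_unit_left hUu, Matrix.one_mul]

lemma U_mul_adj (hμabs : ∀ f g : G, ‖μ f g‖ = 1)
    (hUu : ∀ f : G, U f ∈ Matrix.unitaryGroup A ℂ)
    (hUm : ∀ f g : G, U f * U g = μ f g • U (f * g)) (f g : G) :
    U (f * g) * (U g)ᴴ = (starRingEnd ℂ) (μ f g) • U f := by
  rw [U_fg hμabs hUm f g, Matrix.smul_mul, Matrix.mul_assoc,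
    U_unit_right hUu, Matrix.mul_one]

lemma U_adj (hμabs : ∀ f g : G, ‖μ f g‖ = 1)
    (hUu : ∀ f : G, U f ∈ Matrix.unitaryGroup A ℂ) (hUe : U 1 = 1)
    (hUm : ∀ f g : G, U f * U g = μ f g • U (f * g)) (f : G) :
    (U f)ᴴ = (starRingEnd ℂ) (μ f f⁻¹) • U f⁻¹ := by
  have := U_adj_mul hμabs hUu hUm f f⁻¹
  rwa [mul_inv_cancel, hUe, Matrix.mul_one] at this

lemma phi_conv (hUm : ∀ f g : G, U f * U g = μ f g • U (f * g)) (x y : G → ℂ) :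
    phi U (tconv μ x y) = phi U x * phi U y := by
  simp only [phi, tconv, Finset.sum_smul, Finset.sum_mul, Finset.mul_sum,
    Matrix.smul_mul, Matrix.mul_smul, hUm, smul_smul]
  conv_lhs => rw [Finset.sum_comm]
  conv_rhs => rw [Finset.sum_comm]
  refine Finset.sum_congr rfl fun f _ => ?_
  rw [← Equiv.sum_comp (Equiv.mulLeft f)
    (fun g => (x f * y (f⁻¹ * g) * μ f (f⁻¹ * g)) • U g)]
  refine Finset.sum_congr rfl fun h _ => ?_
  simp only [Equiv.coe_mulLeft, inv_mul_cancel_left]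
  congr 1
  ring

lemma phi_star (hμabs : ∀ f g : G, ‖μ f g‖ = 1)
    (hUu : ∀ f : G, U f ∈ Matrix.unitaryGroup A ℂ) (hUe : U 1 = 1)
    (hUm : ∀ f g : G, U f * U g = μ f g • U (f * g)) (x : G → ℂ) :
    phi U (tstar μ x) = (phi U x)ᴴ := by
  simp only [phi, tstar, Matrix.conjTranspose_sum, Matrix.conjTranspose_smul]
  rw [← Equiv.sum_comp (Equiv.inv G)
    (fun g => (starRingEnd ℂ) (x g⁻¹ * μ g⁻¹ g) • U g)]
  refine Finset.sum_congr rfl fun f _ => ?_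
  simp only [Equiv.inv_apply, inv_inv, _root_.map_mul]
  rw [U_adj hμabs hUu hUe hUm f, smul_smul]
  rfl

end phi

section kernel
variable {A : Type*} [Fintype A] [DecidableEq A]

def toE (x : G → ℂ) : EuclideanSpace ℂ G := (WithLp.equiv 2 (G → ℂ)).symm x
def ofE (x : EuclideanSpace ℂ G) : G → ℂ := WithLp.equiv 2 (G → ℂ) x

def ker (U : G → Matrix A A ℂ) : Submodule ℂ (EuclideanSpace ℂ G) where
  carrier := {x | phi U (ofE x) = 0}
  add_mem' := by
    intro a b ha hb
    simp only [Set.mem_setOf_eq] at *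
    have h : ofE (a + b) = ofE a + ofE b := rfl
    rw [h, phi_add, ha, hb, add_zero]
  zero_mem' := by
    simp only [Set.mem_setOf_eq]
    have h : ofE (0 : EuclideanSpace ℂ G) = 0 := rfl
    rw [h]
    simp [phi]
  smul_mem' := by
    intro c a ha
    simp only [Set.mem_setOf_eq] at *
    have h : ofE (c • a) = c • ofE a := rfl
    rw [h, phi_smul, ha, smul_zero]

variable {U : G → Matrix A A ℂ}

lemma mem_ker {x : G → ℂ} : toE x ∈ ker U ↔ phi U x = 0 := Iff.rfl

lemma inner_toE (x y : G → ℂ) :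
    (inner ℂ (toE x) (toE y) : ℂ) = ∑ g, (starRingEnd ℂ) (x g) * y g := by
  simp [PiLp.inner_apply, RCLike.inner_apply]
  exact Finset.sum_congr rfl fun g _ => mul_comm _ _

lemma right_orth (hμabs : ∀ f g : G, ‖μ f g‖ = 1)
    (hUu : ∀ f : G, U f ∈ Matrix.unitaryGroup A ℂ)
    (hUm : ∀ f g : G, U f * U g = μ f g • U (f * g))
    (x z : G → ℂ) (hz : toE z ∈ (ker U)ᗮ) :
    toE (tconv μ x z) ∈ (ker U)ᗮ := by
  rw [Submodule.mem_orthogonal] at hz ⊢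
  intro u hu
  obtain ⟨k, rfl⟩ : ∃ k : G → ℂ, toE k = u := ⟨ofE u, rfl⟩
  have hk : phi U k = 0 := mem_ker.mp hu
  set w : G → ℂ := fun h => ∑ f, (starRingEnd ℂ) (x f) * (starRingEnd ℂ) (μ f h) * k (f * h)
    with hw
  have hwK : toE w ∈ ker U := by
    rw [mem_ker]
    have hf : ∀ f : G, ∑ h, ((starRingEnd ℂ) (x f) * (starRingEnd ℂ) (μ f h) * k (f * h)) • U h
        = (starRingEnd ℂ) (x f) • ((U f)ᴴ * phi U k) := by
      intro f
      rw [phi, Matrix.mul_sum, Finset.smul_sum]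
      rw [← Equiv.sum_comp (Equiv.mulLeft f) (fun g => (starRingEnd ℂ) (x f) • ((U f)ᴴ * (k g • U g)))]
      refine Finset.sum_congr rfl fun h _ => ?_
      simp only [Equiv.coe_mulLeft, Matrix.mul_smul]
      rw [U_adj_mul hμabs hUu hUm f h]
      simp only [smul_smul]
      congr 1
      ring
    calc phi U w = ∑ h, (∑ f, (starRingEnd ℂ) (x f) * (starRingEnd ℂ) (μ f h) * k (f * h)) • U h := rfl
      _ = ∑ h, ∑ f, ((starRingEnd ℂ) (x f) * (starRingEnd ℂ) (μ f h) * k (f * h)) • U h := by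
          simp [Finset.sum_smul]
      _ = ∑ f, ∑ h, ((starRingEnd ℂ) (x f) * (starRingEnd ℂ) (μ f h) * k (f * h)) • U h :=
          Finset.sum_comm
      _ = ∑ f : G, (starRingEnd ℂ) (x f) • ((U f)ᴴ * phi U k) := by
          exact Finset.sum_congr rfl fun f _ => hf f
      _ = 0 := by simp [hk]
  have hide : (inner ℂ (toE k) (toE (tconv μ x z)) : ℂ) = inner ℂ (toE w) (toE z) := by
    rw [inner_toE, inner_toE]
    simp only [tconv, hw, map_sum, _root_.map_mul, Complex.conj_conj, Finset.mul_sum,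
      Finset.sum_mul]
    conv_lhs => rw [Finset.sum_comm]
    conv_rhs => rw [Finset.sum_comm]
    refine Finset.sum_congr rfl fun f _ => ?_
    rw [← Equiv.sum_comp (Equiv.mulLeft f)
      (fun g => (starRingEnd ℂ) (k g) * (x f * z (f⁻¹ * g) * μ f (f⁻¹ * g)))]
    refine Finset.sum_congr rfl fun h _ => ?_
    simp only [Equiv.coe_mulLeft, inv_mul_cancel_left]
    ring
  rw [hide]
  exact hz (toE w) hwK

lemma left_orth (hμabs : ∀ f g : G, ‖μ f g‖ = 1)
    (hUu : ∀ f : G, U f ∈ Matrix.unitaryGroup A ℂ)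
    (hUm : ∀ f g : G, U f * U g = μ f g • U (f * g))
    (x z : G → ℂ) (hz : toE z ∈ (ker U)ᗮ) :
    toE (tconv μ z x) ∈ (ker U)ᗮ := by
  rw [Submodule.mem_orthogonal] at hz ⊢
  intro u hu
  obtain ⟨k, rfl⟩ : ∃ k : G → ℂ, toE k = u := ⟨ofE u, rfl⟩
  have hk : phi U k = 0 := mem_ker.mp hu
  set w : G → ℂ := fun f => ∑ h, (starRingEnd ℂ) (x h) * (starRingEnd ℂ) (μ f h) * k (f * h)
    with hw
  have hwK : toE w ∈ ker U := by
    rw [mem_ker]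
    have hh : ∀ h : G, ∑ f, ((starRingEnd ℂ) (x h) * (starRingEnd ℂ) (μ f h) * k (f * h)) • U f
        = (starRingEnd ℂ) (x h) • (phi U k * (U h)ᴴ) := by
      intro h
      rw [phi, Matrix.sum_mul, Finset.smul_sum]
      rw [← Equiv.sum_comp (Equiv.mulRight h)
        (fun g => (starRingEnd ℂ) (x h) • ((k g • U g) * (U h)ᴴ))]
      refine Finset.sum_congr rfl fun f _ => ?_
      simp only [Equiv.coe_mulRight, Matrix.smul_mul]
      rw [U_mul_adj hμabs hUu hUm f h]
      simp only [smul_smul]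
      congr 1
      ring
    calc phi U w = ∑ f, (∑ h, (starRingEnd ℂ) (x h) * (starRingEnd ℂ) (μ f h) * k (f * h)) • U f := rfl
      _ = ∑ f, ∑ h, ((starRingEnd ℂ) (x h) * (starRingEnd ℂ) (μ f h) * k (f * h)) • U f := by
          simp [Finset.sum_smul]
      _ = ∑ h, ∑ f, ((starRingEnd ℂ) (x h) * (starRingEnd ℂ) (μ f h) * k (f * h)) • U f :=
          Finset.sum_comm
      _ = ∑ h : G, (starRingEnd ℂ) (x h) • (phi U k * (U h)ᴴ) := by
          exact Finset.sum_congr rfl fun h _ => hh h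
      _ = 0 := by simp [hk]
  have hide : (inner ℂ (toE k) (toE (tconv μ z x)) : ℂ) =
      (starRingEnd ℂ) (inner ℂ (toE z) (toE w) : ℂ) := by
    rw [inner_toE, inner_toE]
    simp only [tconv, hw, map_sum, _root_.map_mul, Complex.conj_conj, Finset.mul_sum,
      Finset.sum_mul]
    rw [Finset.sum_comm]
    refine Finset.sum_congr rfl fun f _ => ?_
    rw [← Equiv.sum_comp (Equiv.mulLeft f)
      (fun g => (starRingEnd ℂ) (k g) * (z f * x (f⁻¹ * g) * μ f (f⁻¹ * g)))]
    refine Finset.sum_congr rfl fun h _ => ?_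
    simp only [Equiv.coe_mulLeft, inv_mul_cancel_left]
    ring
  rw [hide]
  have h0 : (inner ℂ (toE w) (toE z) : ℂ) = 0 := hz (toE w) hwK
  rw [← inner_conj_symm, h0]
  simp

lemma star_orth (hμabs : ∀ f g : G, ‖μ f g‖ = 1)
    (hμel : ∀ f : G, μ 1 f = 1) (hμer : ∀ f : G, μ f 1 = 1)
    (hμc : ∀ f g h : G, μ h f * μ (h * f) g = μ h (f * g) * μ f g)
    (hUu : ∀ f : G, U f ∈ Matrix.unitaryGroup A ℂ) (hUe : U 1 = 1)
    (hUm : ∀ f g : G, U f * U g = μ f g • U (f * g))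
    (z : G → ℂ) (hz : toE z ∈ (ker U)ᗮ) :
    toE (tstar μ z) ∈ (ker U)ᗮ := by
  rw [Submodule.mem_orthogonal] at hz ⊢
  intro u hu
  obtain ⟨k, rfl⟩ : ∃ k : G → ℂ, toE k = u := ⟨ofE u, rfl⟩
  have hkK : toE (tstar μ k) ∈ ker U := by
    rw [mem_ker, phi_star hμabs hUu hUe hUm, mem_ker.mp hu, Matrix.conjTranspose_zero]
  have hide : (inner ℂ (toE k) (toE (tstar μ z)) : ℂ) =
      (starRingEnd ℂ) (inner ℂ (toE (tstar μ k)) (toE z) : ℂ) := by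
    rw [inner_toE, inner_toE]
    simp only [tstar, _root_.map_mul, Complex.conj_conj, map_sum]
    rw [← Equiv.sum_comp (Equiv.inv G)
      (fun g => (starRingEnd ℂ) (k g) * ((starRingEnd ℂ) (z g⁻¹) * (starRingEnd ℂ) (μ g⁻¹ g)))]
    refine Finset.sum_congr rfl fun g _ => ?_
    simp only [Equiv.inv_apply, inv_inv]
    rw [← mu_inv_symm hμer hμel hμc g]
    ring
  rw [hide, hz (toE (tstar μ k)) hkK, map_zero]

end kernel

section units
variable {A : Type*} [Fintype A] [DecidableEq A] {U : G → Matrix A A ℂ}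

lemma mem_both_zero {x : G → ℂ} (h1 : toE x ∈ ker U) (h2 : toE x ∈ (ker U)ᗮ) : x = 0 := by
  have h0 : (inner ℂ (toE x) (toE x) : ℂ) = 0 :=
    (Submodule.mem_orthogonal _ _).mp h2 (toE x) h1
  have hz : toE x = 0 := inner_self_eq_zero.mp h0
  exact congrArg ofE hz

lemma unit_right (hμabs : ∀ f g : G, ‖μ f g‖ = 1)
    (hμer : ∀ f : G, μ f 1 = 1)
    (hUu : ∀ f : G, U f ∈ Matrix.unitaryGroup A ℂ)
    (hUm : ∀ f g : G, U f * U g = μ f g • U (f * g))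
    (q : G → ℂ) (hq : toE q ∈ ker U) (hr : toE (tone - q) ∈ (ker U)ᗮ)
    (x : G → ℂ) (hx : toE x ∈ ker U) : tconv μ x q = x := by
  have hsub : tconv μ x (tone - q) = x - tconv μ x q := by
    rw [tconv_sub_right, tconv_one_right hμer]
  have hK : toE (tconv μ x (tone - q)) ∈ ker U := by
    rw [mem_ker, hsub, phi_sub, phi_conv hUm, mem_ker.mp hx]
    simp
  have hO : toE (tconv μ x (tone - q)) ∈ (ker U)ᗮ := right_orth hμabs hUu hUm x _ hr
  have h0 : tconv μ x (tone - q) = 0 := mem_both_zero hK hO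
  rw [hsub] at h0
  exact (sub_eq_zero.mp h0).symm

lemma unit_left (hμabs : ∀ f g : G, ‖μ f g‖ = 1)
    (hμel : ∀ f : G, μ 1 f = 1)
    (hUu : ∀ f : G, U f ∈ Matrix.unitaryGroup A ℂ)
    (hUm : ∀ f g : G, U f * U g = μ f g • U (f * g))
    (q : G → ℂ) (hq : toE q ∈ ker U) (hr : toE (tone - q) ∈ (ker U)ᗮ)
    (x : G → ℂ) (hx : toE x ∈ ker U) : tconv μ q x = x := by
  have hsub : tconv μ (tone - q) x = x - tconv μ q x := by
    rw [tconv_sub_left, tconv_one_left hμel]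
  have hK : toE (tconv μ (tone - q) x) ∈ ker U := by
    rw [mem_ker, hsub, phi_sub, phi_conv hUm, mem_ker.mp hx, mem_ker.mp hq]
    simp
  have hO : toE (tconv μ (tone - q) x) ∈ (ker U)ᗮ := left_orth hμabs hUu hUm x _ hr
  have h0 : tconv μ (tone - q) x = 0 := mem_both_zero hK hO
  rw [hsub] at h0
  exact (sub_eq_zero.mp h0).symm

lemma q_central (hμabs : ∀ f g : G, ‖μ f g‖ = 1)
    (hμel : ∀ f : G, μ 1 f = 1) (hμer : ∀ f : G, μ f 1 = 1)
    (hμc : ∀ f g h : G, μ h f * μ (h * f) g = μ h (f * g) * μ f g)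
    (hUu : ∀ f : G, U f ∈ Matrix.unitaryGroup A ℂ)
    (hUm : ∀ f g : G, U f * U g = μ f g • U (f * g))
    (q : G → ℂ) (hq : toE q ∈ ker U) (hr : toE (tone - q) ∈ (ker U)ᗮ)
    (a : G → ℂ) : tconv μ q a = tconv μ a q := by
  have h1 : toE (tconv μ q a) ∈ ker U := by
    rw [mem_ker, phi_conv hUm, mem_ker.mp hq, Matrix.zero_mul]
  have h2 : toE (tconv μ a q) ∈ ker U := by
    rw [mem_ker, phi_conv hUm, mem_ker.mp hq, Matrix.mul_zero]
  calc tconv μ q a = tconv μ (tconv μ q a) q :=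
        (unit_right hμabs hμer hUu hUm q hq hr _ h1).symm
    _ = tconv μ q (tconv μ a q) := tconv_assoc hμc q a q
    _ = tconv μ a q := unit_left hμabs hμel hUu hUm q hq hr _ h2

lemma q_star (hμabs : ∀ f g : G, ‖μ f g‖ = 1)
    (hμel : ∀ f : G, μ 1 f = 1) (hμer : ∀ f : G, μ f 1 = 1)
    (hμc : ∀ f g h : G, μ h f * μ (h * f) g = μ h (f * g) * μ f g)
    (hUu : ∀ f : G, U f ∈ Matrix.unitaryGroup A ℂ) (hUe : U 1 = 1)
    (hUm : ∀ f g : G, U f * U g = μ f g • U (f * g))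
    (q : G → ℂ) (hq : toE q ∈ ker U) (hr : toE (tone - q) ∈ (ker U)ᗮ) :
    tstar μ q = q := by
  have h1 : toE (tstar μ q) ∈ ker U := by
    rw [mem_ker, phi_star hμabs hUu hUe hUm, mem_ker.mp hq, Matrix.conjTranspose_zero]
  have h2 : toE (tstar μ (tone - q)) ∈ (ker U)ᗮ :=
    star_orth hμabs hμel hμer hμc hUu hUe hUm _ hr
  have h3 : tstar μ (tone - q) = tone - tstar μ q := by
    rw [tstar_sub, tstar_tone hμel]
  have hfun : q - tstar μ q = tstar μ (tone - q) - (tone - q) := by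
    rw [h3]; abel
  have hdK : toE (q - tstar μ q) ∈ ker U := by
    have e : toE (q - tstar μ q) = toE q - toE (tstar μ q) := rfl
    rw [e]; exact Submodule.sub_mem _ hq h1
  have hdO : toE (q - tstar μ q) ∈ (ker U)ᗮ := by
    have : toE (q - tstar μ q) = toE (tstar μ (tone - q)) - toE (tone - q) :=
      congrArg toE hfun
    rw [this]
    exact Submodule.sub_mem _ h2 hr
  have h0 := mem_both_zero hdK hdO
  have := sub_eq_zero.mp h0
  exact this.symm

end units

section expand
variable {A : Type*} [Fintype A] [DecidableEq A] {U : G → Matrix A A ℂ}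

lemma mu_I2 (hμabs : ∀ f g : G, ‖μ f g‖ = 1)
    (hμel : ∀ f : G, μ 1 f = 1) (hμer : ∀ f : G, μ f 1 = 1)
    (hμc : ∀ f g h : G, μ h f * μ (h * f) g = μ h (f * g) * μ f g) (f g : G) :
    (starRingEnd ℂ) (μ f f⁻¹) * μ f⁻¹ (f * g) = (starRingEnd ℂ) (μ f g) := by
  apply mul_right_cancel₀ (mu_ne hμabs f g)
  rw [mul_assoc, mu_I1 hμel hμc f g, ← mu_inv_symm hμer hμel hμc f,
    mu_conj_mul hμabs, mu_conj_mul hμabs]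

lemma tconv_tstar_apply (hμabs : ∀ f g : G, ‖μ f g‖ = 1)
    (hμel : ∀ f : G, μ 1 f = 1) (hμer : ∀ f : G, μ f 1 = 1)
    (hμc : ∀ f g h : G, μ h f * μ (h * f) g = μ h (f * g) * μ f g)
    (x y : G → ℂ) (g : G) :
    tconv μ (tstar μ x) y g
      = ∑ f, (starRingEnd ℂ) (μ f g) * ((starRingEnd ℂ) (x f) * y (f * g)) := by
  show (∑ f, tstar μ x f * y (f⁻¹ * g) * μ f (f⁻¹ * g)) = _
  rw [← Equiv.sum_comp (Equiv.inv G) (fun f => tstar μ x f * y (f⁻¹ * g) * μ f (f⁻¹ * g))]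
  refine Finset.sum_congr rfl fun f _ => ?_
  simp only [Equiv.inv_apply, tstar, inv_inv, _root_.map_mul]
  have h := mu_I2 hμabs hμel hμer hμc f g
  linear_combination (starRingEnd ℂ) (x f) * y (f * g) * h

lemma phi_finsum {ι : Type*} (s : Finset ι) (x : ι → (G → ℂ)) :
    phi U (∑ i ∈ s, x i) = ∑ i ∈ s, phi U (x i) := by
  classical
  induction s using Finset.induction_on with
  | empty => simp [phi]
  | insert _ _ h ih => rw [Finset.sum_insert h, Finset.sum_insert h, phi_add, ih]

lemma expand_c (hμabs : ∀ f g : G, ‖μ f g‖ = 1)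
    (hμel : ∀ f : G, μ 1 f = 1) (hμer : ∀ f : G, μ f 1 = 1)
    (hμc : ∀ f g h : G, μ h f * μ (h * f) g = μ h (f * g) * μ f g)
    (hUu : ∀ f : G, U f ∈ Matrix.unitaryGroup A ℂ) (hUe : U 1 = 1)
    (hUm : ∀ f g : G, U f * U g = μ f g • U (f * g))
    (q : G → ℂ) (hq : toE q ∈ ker U) (hr : toE (tone - q) ∈ (ker U)ᗮ)
    (x y : G → ℂ) (e e' : ℂ) (he : (starRingEnd ℂ) e = e) :
    tconv μ (tstar μ (x - tconv μ q x + e • q)) (y - tconv μ q y + e' • q)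
      = tconv μ (tstar μ x) y - tconv μ q (tconv μ (tstar μ x) y) + (e * e') • q := by
  have hq' : ∀ z : G → ℂ, toE (tconv μ q z) ∈ ker U := fun z => by
    rw [mem_ker, phi_conv hUm, mem_ker.mp hq, Matrix.zero_mul]
  have hUL : ∀ z : G → ℂ, tconv μ q (tconv μ q z) = tconv μ q z := fun z =>
    unit_left hμabs hμel hUu hUm q hq hr _ (hq' z)
  have hUR : ∀ z : G → ℂ, tconv μ (tconv μ q z) q = tconv μ q z := fun z =>
    unit_right hμabs hμer hUu hUm q hq hr _ (hq' z)
  have hqq : tconv μ q q = q := unit_right hμabs hμer hUu hUm q hq hr q hq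
  have hcen : ∀ a, tconv μ q a = tconv μ a q :=
    q_central hμabs hμel hμer hμc hUu hUm q hq hr
  set s := tstar μ x with hs
  have hstar : tstar μ (x - tconv μ q x + e • q) = s - tconv μ q s + e • q := by
    rw [tstar_add, tstar_sub, tstar_smul, he]
    rw [tstar_tconv hμabs hμer hμc q x]
    rw [q_star hμabs hμel hμer hμc hUu hUe hUm q hq hr]
    rw [← hs, ← hcen s]
  rw [hstar]
  simp only [tconv_sub_left, tconv_add_left, tconv_smul_left, tconv_sub_right,
    tconv_add_right, tconv_smul_right]
  have hA : tconv μ q (tconv μ s (tconv μ q y)) = tconv μ s (tconv μ q y) := by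
    refine unit_left hμabs hμel hUu hUm q hq hr _ ?_
    rw [mem_ker, phi_conv hUm, phi_conv hUm, mem_ker.mp hq, Matrix.zero_mul, Matrix.mul_zero]
  rw [tconv_assoc hμc q s y, tconv_assoc hμc q s (tconv μ q y)]
  rw [hUR s, ← hcen s, hA, hqq, hUL y]
  module

end expand

end
end Stmt7

open Stmt7

theorem stmt_7 {G : Type*} [Group G] [Fintype G] [DecidableEq G]
    (μ : G → G → ℂ)
    (hμabs : ∀ f g : G, ‖μ f g‖ = 1)
    (hμel : ∀ f : G, μ 1 f = 1) (hμer : ∀ f : G, μ f 1 = 1)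
    (hμc : ∀ f g h : G, μ h f * μ (h * f) g = μ h (f * g) * μ f g)
    {A : Type*} [Fintype A] [DecidableEq A] [Nonempty A]
    (U : G → Matrix A A ℂ)
    (hUu : ∀ f : G, U f ∈ Matrix.unitaryGroup A ℂ)
    (hUe : U 1 = 1)
    (hUm : ∀ f g : G, U f * U g = μ f g • U (f * g))
    {B : Type*} [Fintype B] [DecidableEq B] [Nonempty B]
    (W : G → Matrix B B ℂ)
    (h𝒰 : (∑ f : G, (U f) ⊗ₖ (W f)) ∈ Matrix.unitaryGroup (A × B) ℂ) :
    ∃ W' : G → Matrix B B ℂ,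
      (∑ f : G, (U f) ⊗ₖ (W' f)) = (∑ f : G, (U f) ⊗ₖ (W f)) ∧
      ∀ g : G, ∑ f : G, star (μ f g) • ((W' f)ᴴ * W' (f * g))
        = if g = 1 then (1 : Matrix B B ℂ) else 0 := by
  classical
  set q : G → ℂ :=
    ofE ((Submodule.orthogonalProjection (Stmt7.ker U) (toE tone) : _) : EuclideanSpace ℂ G) with hqdef
  have hq : toE q ∈ Stmt7.ker U := SetLike.coe_mem _
  have hr : toE (tone - q) ∈ (Stmt7.ker U)ᗮ :=
    Submodule.sub_starProjection_mem_orthogonal (K := Stmt7.ker U) (toE tone)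
  have hphiq : phi U q = 0 := mem_ker.mp hq
  refine ⟨fun g => Matrix.of fun c b =>
      ((fun g' => W g' c b) - tconv μ q (fun g' => W g' c b)
        + (if c = b then (1 : ℂ) else 0) • q) g, ?_, ?_⟩
  · -- Goal 1 : same Kronecker sum
    ext ⟨a, c⟩ ⟨a', b⟩
    simp only [Matrix.sum_apply, Matrix.kroneckerMap_apply, Matrix.of_apply]
    have hent : ∀ x : G → ℂ, (∑ f, U f a a' * x f) = phi U x a a' := by
      intro x
      rw [phi, Matrix.sum_apply]
      refine Finset.sum_congr rfl fun f _ => ?_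
      simp [Matrix.smul_apply, smul_eq_mul]
      ring
    have hphi : phi U ((fun g' => W g' c b) - tconv μ q (fun g' => W g' c b)
        + (if c = b then (1 : ℂ) else 0) • q) = phi U (fun g' => W g' c b) := by
      rw [phi_add, phi_sub, phi_smul, phi_conv hUm, hphiq]
      simp
    calc (∑ f, U f a a' * ((fun g' => W g' c b) - tconv μ q (fun g' => W g' c b)
          + (if c = b then (1 : ℂ) else 0) • q) f)
        = phi U ((fun g' => W g' c b) - tconv μ q (fun g' => W g' c b)
          + (if c = b then (1 : ℂ) else 0) • q) a a' := hent _
      _ = phi U (fun g' => W g' c b) a a' := by rw [hphi]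
      _ = ∑ f, U f a a' * W f c b := (hent (fun g' => W g' c b)).symm
  · -- Goal 2 : orthogonality
    intro g
    have hU1 : (∑ f, U f ⊗ₖ W f)ᴴ * (∑ f, U f ⊗ₖ W f) = 1 := by
      have h := (Unitary.mem_iff.mp h𝒰).1
      rwa [Matrix.star_eq_conjTranspose] at h
    ext b b'
    -- key unitarity input
    have key2 : (∑ c, (phi U (fun g' => W g' c b))ᴴ * phi U (fun g' => W g' c b'))
        = (if b = b' then (1 : Matrix A A ℂ) else 0) := by
      ext a a'
      have h : ((∑ f, U f ⊗ₖ W f)ᴴ * (∑ f, U f ⊗ₖ W f)) (a, b) (a', b')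
          = (1 : Matrix (A × B) (A × B) ℂ) (a, b) (a', b') := by rw [hU1]
      rw [Matrix.mul_apply, Fintype.sum_prod_type] at h
      simp only [Matrix.conjTranspose_apply, Matrix.sum_apply, Matrix.kroneckerMap_apply,
        Complex.star_def] at h
      have hsw : ∀ (xx aa : A) (cc bb : B),
          (∑ f, U f xx aa * W f cc bb) = ∑ f, W f cc bb * U f xx aa := fun xx aa cc bb =>
        Finset.sum_congr rfl fun f _ => mul_comm _ _
      simp only [hsw] at h
      simp only [Matrix.sum_apply, Matrix.mul_apply, Matrix.conjTranspose_apply,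
        Complex.star_def, phi, Matrix.smul_apply, smul_eq_mul]
      rw [Finset.sum_comm]
      rw [h, Matrix.one_apply]
      by_cases hbb : b = b'
      · subst hbb
        by_cases haa : a = a' <;> simp [haa, Matrix.one_apply]
      · have : (a, b) ≠ (a', b') := by simp [hbb]
        simp [this, hbb, Matrix.zero_apply]
    -- scalar identity
    have hexp : ∀ c : B,
        tconv μ (tstar μ ((fun g' => W g' c b) - tconv μ q (fun g' => W g' c b)
            + (if c = b then (1 : ℂ) else 0) • q))
          ((fun g' => W g' c b') - tconv μ q (fun g' => W g' c b')
            + (if c = b' then (1 : ℂ) else 0) • q)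
        = tconv μ (tstar μ (fun g' => W g' c b)) (fun g' => W g' c b')
          - tconv μ q (tconv μ (tstar μ (fun g' => W g' c b)) (fun g' => W g' c b'))
          + ((if c = b then (1 : ℂ) else 0) * (if c = b' then (1 : ℂ) else 0)) • q :=
      fun c => expand_c hμabs hμel hμer hμc hUu hUe hUm q hq hr _ _ _ _
        (by split_ifs <;> simp)
    set t : G → ℂ :=
      ∑ c, tconv μ (tstar μ (fun g' => W g' c b)) (fun g' => W g' c b') with ht
    set eb : ℂ := if b = b' then (1 : ℂ) else 0 with heb
    have hphit : phi U t = (if b = b' then (1 : Matrix A A ℂ) else 0) := by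
      rw [ht, phi_finsum]
      rw [Finset.sum_congr rfl fun (c : B) _ =>
        (by rw [phi_conv hUm, phi_star hμabs hUu hUe hUm] :
          phi U (tconv μ (tstar μ (fun g' => W g' c b)) (fun g' => W g' c b'))
            = (phi U (fun g' => W g' c b))ᴴ * phi U (fun g' => W g' c b'))]
      exact key2
    have htK : toE (t - eb • tone) ∈ Stmt7.ker U := by
      rw [mem_ker, phi_sub, phi_smul, phi_tone hUe, hphit, heb]
      split_ifs <;> simp
    have hqt : tconv μ q t = t - eb • tone + eb • q := by
      have hdecomp : t = (t - eb • tone) + eb • tone := by abel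
      conv_lhs => rw [hdecomp]
      rw [tconv_add_right, tconv_smul_right,
        unit_left hμabs hμel hUu hUm q hq hr _ htK, tconv_one_right hμer]
    have hdelta : (∑ c : B, (if c = b then (1 : ℂ) else 0) * (if c = b' then (1 : ℂ) else 0))
        = eb := by
      rw [heb, Finset.sum_eq_single b]
      · simp
      · intro c _ hc; simp [hc]
      · intro hmem; exact absurd (Finset.mem_univ b) hmem
    have hmain : (∑ c, tconv μ (tstar μ ((fun g' => W g' c b) - tconv μ q (fun g' => W g' c b)
            + (if c = b then (1 : ℂ) else 0) • q))
          ((fun g' => W g' c b') - tconv μ q (fun g' => W g' c b')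
            + (if c = b' then (1 : ℂ) else 0) • q))
        = eb • tone := by
      rw [Finset.sum_congr rfl fun c _ => hexp c]
      rw [Finset.sum_add_distrib, Finset.sum_sub_distrib, ← tconv_sum_right,
        ← Finset.sum_smul, ← ht, hdelta, hqt]
      module
    -- entry computation
    simp only [Matrix.sum_apply, Matrix.smul_apply, Matrix.mul_apply,
      Matrix.conjTranspose_apply, Matrix.of_apply, smul_eq_mul, Complex.star_def,
      Finset.mul_sum]
    rw [Finset.sum_comm]
    rw [Finset.sum_congr rfl fun (c : B) _ =>
      (tconv_tstar_apply hμabs hμel hμer hμc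
        ((fun g' => W g' c b) - tconv μ q (fun g' => W g' c b)
          + (if c = b then (1 : ℂ) else 0) • q)
        ((fun g' => W g' c b') - tconv μ q (fun g' => W g' c b')
          + (if c = b' then (1 : ℂ) else 0) • q) g).symm]
    have happ := congrFun hmain g
    rw [Finset.sum_apply] at happ
    rw [happ]
    rw [Pi.smul_apply, smul_eq_mul, heb]
    by_cases hg : g = 1
    · subst hg
      simp only [tone, if_pos rfl, mul_one]
      split_ifs with hbb <;> simp [Matrix.one_apply, hbb]
    · simp [tone, hg]
end

section
/- Let G be a finite group, μ : G → G → ℂ a factor system (|μ(f,g)| = 1 for all f,g; μ(e,f) = μ(f,e) = 1; and μ(h,f)μ(hf,g) = μ(h,fg)μ(f,g) for all f,g,h). Let ι be a finite index type, d : ι → ℕ with d λ ≥ 1, and for each λ ∈ ι let D λ : G → Matrix (Fin (d λ)) (Fin (d λ)) ℂ be a projective unitary representation of G with factor system μ that is irreducible (the only ℂ-subspaces of Fin (d λ) → ℂ invariant under every matrix D λ f are the zero subspace and the whole space) and such that the D λ are pairwise inequivalent (for λ ≠ λ' there is no invertible matrix S with S · (D λ f) = (D λ' f) · S for all f ∈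 G). Let σ be a nonempty finite index type, ℓ : σ → ι, and define U : G → Matrix (Σ i : σ, Fin (d (ℓ i))) (Σ i : σ, Fin (d (ℓ i))) ℂ as the block-diagonal matrix U f = blockDiagonal' (fun i => D (ℓ i) f). Then the dimension of the ℂ-linear span of the set {U f : f ∈ G} equals Σ_{λ ∈ image of ℓ} (d λ)². -/
open Matrix

private lemma conj_mul_self_of_abs {z : ℂ} (h : ‖z‖ = 1) : z * star z = 1 := by
  rw [Complex.star_def, Complex.mul_conj]
  norm_cast
  simp [Complex.normSq_eq_norm_sq, h]

private lemma std_entry {k l : Type*} [Fintype k] [Fintype l] [DecidableEq k] [DecidableEq l]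
    (A : Matrix k k ℂ) (B : Matrix l l ℂ) (a b : k) (c e : l) :
    (A * Matrix.single b c (1:ℂ) * Bᴴ) a e = A a b * star (B e c) := by
  simp only [Matrix.mul_apply, Matrix.single, conjTranspose_apply, ite_mul, mul_ite,
    of_apply, mul_one, mul_zero, zero_mul, ite_and]
  simp [Finset.sum_ite_eq, Finset.sum_ite_eq', ite_mul]

section Reps
set_option linter.unusedSectionVars false
variable {G : Type*} [Group G] [Fintype G] {n m : ℕ}

private lemma intertwine_sum (μ : G → G → ℂ) (hμabs : ∀ f g : G, ‖μ f g‖ = 1)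
    (D1 : G → Matrix (Fin n) (Fin n) ℂ) (D2 : G → Matrix (Fin m) (Fin m) ℂ)
    (h1 : ∀ f g, D1 f * D1 g = μ f g • D1 (f * g))
    (h2 : ∀ f g, D2 f * D2 g = μ f g • D2 (f * g))
    (hu2 : ∀ f, (D2 f)ᴴ * D2 f = 1)
    (X : Matrix (Fin n) (Fin m) ℂ) (g : G) :
    D1 g * (∑ f : G, D1 f * X * (D2 f)ᴴ) = (∑ f : G, D1 f * X * (D2 f)ᴴ) * D2 g := by
  rw [Matrix.mul_sum, Matrix.sum_mul]
  refine Fintype.sum_bijective (fun f => g * f) (Group.mulLeft_bijective g) _ _ (fun f => ?_)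
  have hstar : μ g f • (D2 f)ᴴ = (D2 (g * f))ᴴ * D2 g := by
    have := congrArg conjTranspose (h2 g f)
    rw [conjTranspose_mul, conjTranspose_smul] at this
    have h3 : (D2 f)ᴴ * ((D2 g)ᴴ * D2 g) = (star (μ g f) • (D2 (g * f))ᴴ) * D2 g := by
      rw [← mul_assoc, this]
    rw [hu2, mul_one] at h3
    rw [h3, smul_mul_assoc, smul_smul, conj_mul_self_of_abs (hμabs g f), one_smul]
  calc D1 g * (D1 f * X * (D2 f)ᴴ)
      = (D1 g * D1 f) * (X * (D2 f)ᴴ) := by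
        rw [Matrix.mul_assoc, Matrix.mul_assoc]
    _ = μ g f • D1 (g * f) * (X * (D2 f)ᴴ) := by rw [h1]
    _ = D1 (g * f) * (X * (μ g f • (D2 f)ᴴ)) := by
        rw [Matrix.smul_mul, Matrix.mul_smul, Matrix.mul_smul]
    _ = D1 (g * f) * X * (D2 (g * f))ᴴ * D2 g := by
        rw [hstar, ← Matrix.mul_assoc, ← Matrix.mul_assoc]

private lemma schur_zero_or_equiv
    (D1 : G → Matrix (Fin n) (Fin n) ℂ) (D2 : G → Matrix (Fin m) (Fin m) ℂ)
    (hirr1 : ∀ S : Submodule ℂ (Fin n → ℂ),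
      (∀ f : G, ∀ v ∈ S, (D1 f).mulVec v ∈ S) → S = ⊥ ∨ S = ⊤)
    (hirr2 : ∀ S : Submodule ℂ (Fin m → ℂ),
      (∀ f : G, ∀ v ∈ S, (D2 f).mulVec v ∈ S) → S = ⊥ ∨ S = ⊤)
    (E : Matrix (Fin n) (Fin m) ℂ)
    (hE : ∀ g : G, D1 g * E = E * D2 g) :
    E = 0 ∨ ∃ T : Matrix (Fin m) (Fin n) ℂ, E * T = 1 ∧ T * E = 1 := by
  by_cases hE0 : E = 0
  · exact Or.inl hE0
  right
  have hcomm : ∀ (g : G) (v : Fin m → ℂ),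
      (D1 g).mulVec (E.mulVec v) = E.mulVec ((D2 g).mulVec v) := by
    intro g v
    rw [Matrix.mulVec_mulVec, Matrix.mulVec_mulVec, hE]
  have hker : LinearMap.ker (Matrix.toLin' E) = ⊥ := by
    have hinv : ∀ f : G, ∀ v ∈ LinearMap.ker (Matrix.toLin' E), (D2 f).mulVec v ∈
        LinearMap.ker (Matrix.toLin' E) := by
      intro f v hv
      rw [LinearMap.mem_ker, Matrix.toLin'_apply] at hv ⊢
      rw [← hcomm, hv, Matrix.mulVec_zero]
    rcases hirr2 _ hinv with h | h
    · exact h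
    · exact absurd (Matrix.toLin'.injective
        (by rw [map_zero]; exact LinearMap.ker_eq_top.mp h)) hE0
  have hrange : LinearMap.range (Matrix.toLin' E) = ⊤ := by
    have hinv : ∀ f : G, ∀ v ∈ LinearMap.range (Matrix.toLin' E), (D1 f).mulVec v ∈
        LinearMap.range (Matrix.toLin' E) := by
      rintro f v ⟨w, rfl⟩
      exact ⟨(D2 f).mulVec w, by rw [Matrix.toLin'_apply, Matrix.toLin'_apply, hcomm]⟩
    rcases hirr1 _ hinv with h | h
    · exact absurd (Matrix.toLin'.injective
        (by rw [map_zero]; exact LinearMap.range_eq_bot.mp h)) hE0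
    · exact h
  have hbij : Function.Bijective (Matrix.toLin' E) :=
    ⟨LinearMap.ker_eq_bot.mp hker, LinearMap.range_eq_top.mp hrange⟩
  let e := LinearEquiv.ofBijective (Matrix.toLin' E) hbij
  refine ⟨Matrix.toLin'.symm (e.symm : (Fin n → ℂ) →ₗ[ℂ] (Fin m → ℂ)), ?_, ?_⟩
  · apply Matrix.toLin'.injective
    rw [Matrix.toLin'_mul, Matrix.toLin'_one, LinearEquiv.apply_symm_apply]
    exact LinearMap.ext fun v => e.apply_symm_apply v
  · apply Matrix.toLin'.injective
    rw [Matrix.toLin'_mul, Matrix.toLin'_one, LinearEquiv.apply_symm_apply]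
    exact LinearMap.ext fun v => e.symm_apply_apply v

private lemma schur_scalar (hn : 0 < n)
    (D1 : G → Matrix (Fin n) (Fin n) ℂ)
    (hirr1 : ∀ S : Submodule ℂ (Fin n → ℂ),
      (∀ f : G, ∀ v ∈ S, (D1 f).mulVec v ∈ S) → S = ⊥ ∨ S = ⊤)
    (E : Matrix (Fin n) (Fin n) ℂ)
    (hE : ∀ g : G, D1 g * E = E * D1 g) :
    ∃ c : ℂ, E = c • 1 := by
  haveI : Nonempty (Fin n) := Fin.pos_iff_nonempty.mp hn
  obtain ⟨c, hc⟩ := Module.End.exists_eigenvalue (Matrix.toLin' E)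
  obtain ⟨v, hv⟩ := hc.exists_hasEigenvector
  refine ⟨c, ?_⟩
  have hmem : ∀ w : Fin n → ℂ,
      w ∈ LinearMap.ker (Matrix.toLin' (E - c • 1)) ↔ E.mulVec w = c • w := by
    intro w
    rw [LinearMap.mem_ker, Matrix.toLin'_apply, Matrix.sub_mulVec, sub_eq_zero,
      Matrix.smul_mulVec, Matrix.one_mulVec]
  have hinv : ∀ f : G, ∀ w ∈ LinearMap.ker (Matrix.toLin' (E - c • 1)),
      (D1 f).mulVec w ∈ LinearMap.ker (Matrix.toLin' (E - c • 1)) := by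
    intro f w hw
    rw [hmem] at hw ⊢
    rw [Matrix.mulVec_mulVec, ← hE, ← Matrix.mulVec_mulVec, hw, Matrix.mulVec_smul]
  rcases hirr1 _ hinv with h | h
  · exfalso
    have hvmem : v ∈ LinearMap.ker (Matrix.toLin' (E - c • 1)) := by
      rw [hmem]
      have := hv.apply_eq_smul
      rwa [Matrix.toLin'_apply] at this
    rw [h, Submodule.mem_bot] at hvmem
    exact hv.right hvmem
  · have h0 : Matrix.toLin' (E - c • 1) = 0 := LinearMap.ker_eq_top.mp h
    have h1 : E - c • 1 = 0 := Matrix.toLin'.injective (by rw [map_zero]; exact h0)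
    exact sub_eq_zero.mp h1

end Reps

theorem stmt_9 {G : Type*} [Group G] [Fintype G] [DecidableEq G]
    (μ : G → G → ℂ)
    (hμabs : ∀ f g : G, ‖μ f g‖ = 1)
    (hμel : ∀ f : G, μ 1 f = 1) (hμer : ∀ f : G, μ f 1 = 1)
    (hμc : ∀ f g h : G, μ h f * μ (h * f) g = μ h (f * g) * μ f g)
    {ι : Type*} [Fintype ι] [DecidableEq ι]
    (d : ι → ℕ) (hd : ∀ lam : ι, 1 ≤ d lam)
    (D : (lam : ι) → G → Matrix (Fin (d lam)) (Fin (d lam)) ℂ)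
    (hDu : ∀ (lam : ι) (f : G), D lam f ∈ Matrix.unitaryGroup (Fin (d lam)) ℂ)
    (hDe : ∀ lam : ι, D lam 1 = 1)
    (hDm : ∀ (lam : ι) (f g : G), D lam f * D lam g = μ f g • D lam (f * g))
    (hirr : ∀ (lam : ι) (S : Submodule ℂ (Fin (d lam) → ℂ)),
      (∀ (f : G), ∀ v ∈ S, (D lam f).mulVec v ∈ S) → S = ⊥ ∨ S = ⊤)
    (hineq : ∀ lam lam' : ι, lam ≠ lam' →
      ¬ ∃ (S : Matrix (Fin (d lam')) (Fin (d lam)) ℂ)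
          (T : Matrix (Fin (d lam)) (Fin (d lam')) ℂ),
        S * T = 1 ∧ T * S = 1 ∧ ∀ f : G, S * D lam f = D lam' f * S)
    {σ : Type*} [Fintype σ] [DecidableEq σ] [Nonempty σ]
    (ℓ : σ → ι)
    (U : G → Matrix (Σ i : σ, Fin (d (ℓ i))) (Σ i : σ, Fin (d (ℓ i))) ℂ)
    (hU : ∀ f : G, U f = Matrix.blockDiagonal' (fun i : σ => D (ℓ i) f)) :
    Module.finrank ℂ (Submodule.span ℂ (Set.range U))
      = ∑ lam ∈ Finset.univ.image ℓ, (d lam) ^ 2 := by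
  classical
  have hu : ∀ (lam : ι) (f : G), (D lam f)ᴴ * D lam f = 1 := by
    intro lam f
    have h := (hDu lam f).1
    rwa [Matrix.star_eq_conjTranspose] at h
  have hkey : ∀ (lam lam' : ι) (X : Matrix (Fin (d lam)) (Fin (d lam')) ℂ) (g : G),
      D lam g * (∑ f : G, D lam f * X * (D lam' f)ᴴ)
        = (∑ f : G, D lam f * X * (D lam' f)ᴴ) * D lam' g :=
    fun lam lam' X g =>
      intertwine_sum μ hμabs (D lam) (D lam') (hDm lam) (hDm lam') (hu lam') X g
  have hzero : ∀ (lam lam' : ι), lam ≠ lam' →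
      ∀ X : Matrix (Fin (d lam)) (Fin (d lam')) ℂ,
      (∑ f : G, D lam f * X * (D lam' f)ᴴ) = 0 := by
    intro lam lam' hne X
    rcases schur_zero_or_equiv (D lam) (D lam') (hirr lam) (hirr lam') _ (hkey lam lam' X)
      with h | ⟨T, hT1, hT2⟩
    · exact h
    · exact absurd ⟨_, T, hT1, hT2, fun f => (hkey lam lam' X f).symm⟩
        (hineq lam' lam (Ne.symm hne))
  have hscal : ∀ (lam : ι) (X : Matrix (Fin (d lam)) (Fin (d lam)) ℂ),
      (∑ f : G, D lam f * X * (D lam f)ᴴ)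
        = (((Fintype.card G : ℂ) * X.trace) / (d lam : ℂ)) • 1 := by
    intro lam X
    obtain ⟨c, hc⟩ := schur_scalar (hd lam) (D lam) (hirr lam) _ (hkey lam lam X)
    have htrone : ∀ f : G, (D lam f * X * (D lam f)ᴴ).trace = X.trace := by
      intro f
      rw [Matrix.trace_mul_comm, ← Matrix.mul_assoc, hu, Matrix.one_mul]
    have htr : (∑ f : G, D lam f * X * (D lam f)ᴴ).trace
        = (Fintype.card G : ℂ) * X.trace := by
      rw [Matrix.trace_sum]
      simp [htrone, Finset.sum_const, Finset.card_univ, nsmul_eq_mul]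
    have hdne : (d lam : ℂ) ≠ 0 :=
      Nat.cast_ne_zero.mpr (Nat.one_le_iff_ne_zero.mp (hd lam))
    have h2 : (Fintype.card G : ℂ) * X.trace = c * (d lam : ℂ) := by
      rw [← htr, hc, Matrix.trace_smul, Matrix.trace_one]
      simp [Fintype.card_fin, mul_comm]
    rw [hc, h2, mul_div_cancel_right₀ _ hdne]
  -- entrywise orthogonality
  have horthne : ∀ (lam lam' : ι), lam ≠ lam' → ∀ (a b : Fin (d lam)) (c e : Fin (d lam')),
      (∑ f : G, D lam f a b * star (D lam' f e c)) = 0 := by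
    intro lam lam' hne a b c e
    calc ∑ f : G, D lam f a b * star (D lam' f e c)
        = ∑ f : G, (D lam f * Matrix.single b c (1:ℂ) * (D lam' f)ᴴ) a e :=
          Finset.sum_congr rfl fun f _ => (std_entry _ _ _ _ _ _).symm
      _ = (∑ f : G, D lam f * Matrix.single b c (1:ℂ) * (D lam' f)ᴴ) a e :=
          (Matrix.sum_apply _ _ _ _).symm
      _ = 0 := by rw [hzero lam lam' hne]; rfl
  have hortheq : ∀ (lam : ι) (a b c e : Fin (d lam)),
      (∑ f : G, D lam f a b * star (D lam f e c)) =
        ((Fintype.card G : ℂ) / (d lam : ℂ)) *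
          ((if b = c then 1 else 0) * (if a = e then 1 else 0)) := by
    intro lam a b c e
    have htrstd : (Matrix.single b c (1:ℂ)).trace = if b = c then 1 else 0 := by
      simp only [Matrix.trace, Matrix.diag, Matrix.single, Matrix.of_apply, ite_and]
      rw [Finset.sum_ite_eq]
      simp [eq_comm]
    calc ∑ f : G, D lam f a b * star (D lam f e c)
        = ∑ f : G, (D lam f * Matrix.single b c (1:ℂ) * (D lam f)ᴴ) a e :=
          Finset.sum_congr rfl fun f _ => (std_entry _ _ _ _ _ _).symm
      _ = (∑ f : G, D lam f * Matrix.single b c (1:ℂ) * (D lam f)ᴴ) a e :=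
          (Matrix.sum_apply _ _ _ _).symm
      _ = ((((Fintype.card G : ℂ) * (Matrix.single b c (1:ℂ)).trace) / (d lam : ℂ)) •
            (1 : Matrix (Fin (d lam)) (Fin (d lam)) ℂ)) a e := by rw [hscal]
      _ = ((Fintype.card G : ℂ) / (d lam : ℂ)) *
            ((if b = c then 1 else 0) * (if a = e then 1 else 0)) := by
          rw [Matrix.smul_apply, Matrix.one_apply, htrstd, smul_eq_mul]
          by_cases h1 : b = c <;> by_cases h2 : a = e <;>
            simp [h1, h2, mul_comm, div_mul_eq_mul_div]
  -- assembly
  set s : Finset ι := Finset.univ.image ℓ with hs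
  have hmem' : ∀ i : σ, ℓ i ∈ s := fun i => Finset.mem_image_of_mem ℓ (Finset.mem_univ i)
  -- the product space
  let v : G → ((lam : {x // x ∈ s}) → Matrix (Fin (d lam.1)) (Fin (d lam.1)) ℂ) :=
    fun f lam => D lam.1 f
  let K : ((lam : {x // x ∈ s}) → Matrix (Fin (d lam.1)) (Fin (d lam.1)) ℂ) →ₗ[ℂ]
      Matrix (Σ i : σ, Fin (d (ℓ i))) (Σ i : σ, Fin (d (ℓ i))) ℂ :=
    { toFun := fun x => Matrix.blockDiagonal' (fun i => x ⟨ℓ i, hmem' i⟩)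
      map_add' := fun x y => Matrix.blockDiagonal'_add _ _
      map_smul' := fun c x =>
        Matrix.blockDiagonal'_smul (α := ℂ) c (fun i => x ⟨ℓ i, hmem' i⟩) }
  have hKv : ∀ f : G, K (v f) = U f := fun f => by rw [hU f]; rfl
  have hKinj : Function.Injective K := by
    intro x y hxy
    funext lam
    obtain ⟨l, hl⟩ := lam
    obtain ⟨i, -, rfl⟩ := Finset.mem_image.mp hl
    ext a bb
    have h3 := congrFun (congrFun hxy ⟨i, a⟩) ⟨i, bb⟩
    simpa [K, Matrix.blockDiagonal'_apply_eq] using h3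
  have hsingle : ∀ (lam : {x // x ∈ s}) (a b : Fin (d lam.1)),
      (Pi.single lam (Matrix.single a b (1:ℂ)) :
        (lam' : {x // x ∈ s}) → Matrix (Fin (d lam'.1)) (Fin (d lam'.1)) ℂ)
        ∈ Submodule.span ℂ (Set.range v) := by
    intro lam a b
    have hdne : (d lam.1 : ℂ) ≠ 0 :=
      Nat.cast_ne_zero.mpr (Nat.one_le_iff_ne_zero.mp (hd lam.1))
    have hGne : ((Fintype.card G : ℂ)) ≠ 0 := Nat.cast_ne_zero.mpr Fintype.card_ne_zero
    have hsum : (∑ f : G, star (D lam.1 f a b) • v f)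
        = ((Fintype.card G : ℂ) / (d lam.1 : ℂ)) •
            (Pi.single lam (Matrix.single a b (1:ℂ)) :
              (lam' : {x // x ∈ s}) → Matrix (Fin (d lam'.1)) (Fin (d lam'.1)) ℂ) := by
      funext lam'
      ext cc ee
      have hL : (∑ f : G, star (D lam.1 f a b) • v f) lam' cc ee
          = ∑ f : G, D lam'.1 f cc ee * star (D lam.1 f a b) := by
        rw [Finset.sum_apply]
        rw [Matrix.sum_apply]
        exact Finset.sum_congr rfl fun f _ => by
          simp [v, Pi.smul_apply, Matrix.smul_apply, mul_comm]
      by_cases hll : lam' = lam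
      · subst hll
        rw [hL, hortheq lam'.1 cc ee b a]
        simp only [Pi.smul_apply, Pi.single_eq_same, Matrix.smul_apply, smul_eq_mul]
        rcases eq_or_ne a cc with h1 | h1 <;> rcases eq_or_ne b ee with h2 | h2
        · subst h1; subst h2; simp [Matrix.single]
        · simp [Matrix.single, h1, h2, Ne.symm h2]
        · simp [Matrix.single, h1, h2, Ne.symm h1]
        · simp [Matrix.single, h1, h2, Ne.symm h1, Ne.symm h2]
      · have hne : lam'.1 ≠ lam.1 := fun h => hll (Subtype.ext h)
        rw [hL, horthne lam'.1 lam.1 hne cc ee b a]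
        simp [Pi.single_eq_of_ne hll]
    have heq : (Pi.single lam (Matrix.single a b (1:ℂ)) :
          (lam' : {x // x ∈ s}) → Matrix (Fin (d lam'.1)) (Fin (d lam'.1)) ℂ)
        = ((d lam.1 : ℂ) / (Fintype.card G : ℂ)) • ∑ f : G, star (D lam.1 f a b) • v f := by
      rw [hsum, smul_smul]
      rw [div_mul_div_comm, mul_comm (d lam.1 : ℂ), div_self (by
        exact mul_ne_zero hGne hdne), one_smul]
    rw [heq]
    exact Submodule.smul_mem _ _ (Submodule.sum_mem _ fun f _ =>
      Submodule.smul_mem _ _ (Submodule.subset_span ⟨f, rfl⟩))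
  have hspan : Submodule.span ℂ (Set.range v) = ⊤ := by
    rw [eq_top_iff]
    have hb := Module.Basis.span_eq (Pi.basis
      (fun lam : {x // x ∈ s} => Matrix.stdBasis ℂ (Fin (d lam.1)) (Fin (d lam.1))))
    rw [← hb]
    refine Submodule.span_le.mpr ?_
    rintro x ⟨⟨lam, a, b⟩, rfl⟩
    rw [Pi.basis_apply, Matrix.stdBasis_eq_single]
    exact hsingle lam a b
  have hrangeU : Submodule.span ℂ (Set.range U) = LinearMap.range K := by
    have hre : Set.range U = K '' Set.range v := by
      ext M
      constructor
      · rintro ⟨f, rfl⟩; exact ⟨v f, ⟨f, rfl⟩, hKv f⟩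
      · rintro ⟨x, ⟨f, rfl⟩, rfl⟩; exact ⟨f, (hKv f).symm⟩
    rw [hre, Submodule.span_image, hspan, Submodule.map_top]
  rw [hrangeU]
  rw [← (LinearEquiv.ofInjective K hKinj).finrank_eq]
  rw [Module.finrank_pi_fintype]
  calc ∑ lam : {x // x ∈ s},
        Module.finrank ℂ (Matrix (Fin (d lam.1)) (Fin (d lam.1)) ℂ)
      = ∑ lam : {x // x ∈ s}, d lam.1 ^ 2 := by
        refine Finset.sum_congr rfl fun lam _ => ?_
        rw [Module.finrank_matrix]
        simp [sq, Fintype.card_fin]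
    _ = ∑ lam ∈ s, d lam ^ 2 := Finset.sum_coe_sort s (fun lam => d lam ^ 2)
end

section
/- Let G be a finite group with N = |G|, μ : G → G → ℂ a factor system (|μ(f,g)| = 1 for all f,g; μ(e,f) = μ(f,e) = 1; and μ(h,f)μ(hf,g) = μ(h,fg)μ(f,g) for all f,g,h), and let (D λ)_{λ∈ι} be a family of pairwise-inequivalent irreducible projective unitary representations of G with factor system μ, D λ : G → Matrix (Fin (d λ)) (Fin (d λ)) ℂ, satisfying Σ_{λ∈ι} (d λ)² = N. Let B be a nonempty finite index type, W : G → Matrix B B ℂ arbitrary, and for each λ define Q λ := Σ_{f∈G} (D λ f) ⊗ (W f), a matrix indexed by Fin (d λ) × B. Then for every f ∈ G and all p, q ∈ B: (W f)(p,q) = Σ_{λ∈ι} (d λ / N) · Σ_{j,k ∈ Fin (d λ)} conj((D λ f)(j,k)) · (Q λ)((j,p),(k,q)). -/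
open Matrix

-- Schur: commutant is scalar
lemma schur_scalar_s12 {G : Type*} [Group G] {k : ℕ} (hk : 1 ≤ k)
    (D : G → Matrix (Fin k) (Fin k) ℂ)
    (hirr : ∀ (S : Submodule ℂ (Fin k → ℂ)),
      (∀ f : G, ∀ v ∈ S, (D f).mulVec v ∈ S) → S = ⊥ ∨ S = ⊤)
    (T : Matrix (Fin k) (Fin k) ℂ)
    (hT : ∀ f : G, D f * T = T * D f) :
    ∃ c : ℂ, T = c • (1 : Matrix (Fin k) (Fin k) ℂ) := by
  haveI : Nonempty (Fin k) := ⟨⟨0, hk⟩⟩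
  obtain ⟨c, hc⟩ := Module.End.exists_eigenvalue (Matrix.toLin' T : Module.End ℂ (Fin k → ℂ))
  obtain ⟨v, hv⟩ := hc.exists_hasEigenvector
  refine ⟨c, ?_⟩
  set S := LinearMap.ker (Matrix.toLin' (T - c • 1)) with hS
  have hinv : ∀ f : G, ∀ w ∈ S, (D f).mulVec w ∈ S := by
    intro f w hw
    simp only [hS, LinearMap.mem_ker, Matrix.toLin'_apply] at hw ⊢
    rw [Matrix.sub_mulVec] at hw ⊢
    have h1 : T.mulVec ((D f).mulVec w) = (D f).mulVec (T.mulVec w) := by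
      rw [Matrix.mulVec_mulVec, Matrix.mulVec_mulVec, ← hT f]
    have h2 : T.mulVec w = (c • (1 : Matrix (Fin k) (Fin k) ℂ)).mulVec w := by
      rwa [sub_eq_zero] at hw
    rw [h1, h2]
    simp [Matrix.smul_mulVec, Matrix.one_mulVec, sub_eq_zero, Matrix.mulVec_smul]
  rcases hirr S hinv with h | h
  · exfalso
    have : v ∈ S := by
      simp only [hS, LinearMap.mem_ker, Matrix.toLin'_apply, Matrix.sub_mulVec, sub_eq_zero]
      have := hv.apply_eq_smul
      simp only [Matrix.toLin'_apply] at this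
      simp [this, Matrix.smul_mulVec, Matrix.one_mulVec]
    rw [h] at this
    exact hv.2 this
  · have : Matrix.toLin' (T - c • 1) = 0 := LinearMap.ker_eq_top.mp h
    have := Matrix.toLin'.injective (by simpa using this : Matrix.toLin' (T - c • 1) = Matrix.toLin' 0)
    rw [sub_eq_zero] at this
    exact this

lemma schur_zero {G : Type*} [Group G] {k k' : ℕ} (hk : 1 ≤ k)
    (D : G → Matrix (Fin k) (Fin k) ℂ) (D' : G → Matrix (Fin k') (Fin k') ℂ)
    (hirr : ∀ (S : Submodule ℂ (Fin k → ℂ)),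
      (∀ f : G, ∀ v ∈ S, (D f).mulVec v ∈ S) → S = ⊥ ∨ S = ⊤)
    (hirr' : ∀ (S : Submodule ℂ (Fin k' → ℂ)),
      (∀ f : G, ∀ v ∈ S, (D' f).mulVec v ∈ S) → S = ⊥ ∨ S = ⊤)
    (hineq : ¬ ∃ (S : Matrix (Fin k') (Fin k) ℂ) (T : Matrix (Fin k) (Fin k') ℂ),
        S * T = 1 ∧ T * S = 1 ∧ ∀ f : G, S * D f = D' f * S)
    (T : Matrix (Fin k') (Fin k) ℂ)
    (hT : ∀ f : G, T * D f = D' f * T) :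
    T = 0 := by
  haveI : Nonempty (Fin k) := ⟨⟨0, hk⟩⟩
  by_contra hTne
  -- kernel of T is D-invariant
  have hker : ∀ f : G, ∀ v ∈ LinearMap.ker (Matrix.toLin' T), (D f).mulVec v ∈ LinearMap.ker (Matrix.toLin' T) := by
    intro f v hv
    simp only [LinearMap.mem_ker, Matrix.toLin'_apply] at hv ⊢
    rw [Matrix.mulVec_mulVec, hT f, ← Matrix.mulVec_mulVec, hv, Matrix.mulVec_zero]
  rcases hirr _ hker with hbot | htop
  swap
  · exact hTne (Matrix.toLin'.injective (by simpa using LinearMap.ker_eq_top.mp htop))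
  -- T injective
  have hinj : Function.Injective (Matrix.toLin' T) := by
    rw [← LinearMap.ker_eq_bot]; exact hbot
  -- range of T is D'-invariant
  have hrange : ∀ f : G, ∀ v ∈ LinearMap.range (Matrix.toLin' T), (D' f).mulVec v ∈ LinearMap.range (Matrix.toLin' T) := by
    rintro f v ⟨w, rfl⟩
    refine ⟨(D f).mulVec w, ?_⟩
    simp only [Matrix.toLin'_apply]
    rw [Matrix.mulVec_mulVec, hT f, ← Matrix.mulVec_mulVec]
  rcases hirr' _ hrange with hbot' | htop'
  · -- range = ⊥ means T = 0
    exact hTne (Matrix.toLin'.injective (by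
      simpa using LinearMap.range_eq_bot.mp hbot'))
  · -- T bijective: build equivalence, contradiction with hineq
    have hbij : Function.Bijective (Matrix.toLin' T) :=
      ⟨hinj, LinearMap.range_eq_top.mp htop'⟩
    let e := LinearEquiv.ofBijective (Matrix.toLin' T) hbij
    refine hineq ⟨T, LinearMap.toMatrix' (e.symm : (Fin k' → ℂ) →ₗ[ℂ] (Fin k → ℂ)), ?_, ?_, hT⟩
    · apply Matrix.toLin'.injective
      rw [Matrix.toLin'_mul, Matrix.toLin'_toMatrix', Matrix.toLin'_one]
      exact LinearMap.ext fun v => e.apply_symm_apply v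
    · apply Matrix.toLin'.injective
      rw [Matrix.toLin'_mul, Matrix.toLin'_toMatrix', Matrix.toLin'_one]
      exact LinearMap.ext fun v => e.symm_apply_apply v

lemma avg_intertwine {G : Type*} [Group G] [Fintype G]
    (μ : G → G → ℂ) (hμabs : ∀ f g : G, ‖μ f g‖ = 1)
    {k k' : ℕ}
    (D : G → Matrix (Fin k) (Fin k) ℂ) (D' : G → Matrix (Fin k') (Fin k') ℂ)
    (hDm : ∀ f g : G, D f * D g = μ f g • D (f * g))
    (hDm' : ∀ f g : G, D' f * D' g = μ f g • D' (f * g))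
    (hDu' : ∀ f : G, D' f ∈ Matrix.unitaryGroup (Fin k') ℂ)
    (X : Matrix (Fin k) (Fin k') ℂ) (f : G) :
    D f * (∑ g : G, D g * X * (D' g)ᴴ) = (∑ g : G, D g * X * (D' g)ᴴ) * D' f := by
  have key : ∀ g : G, (D' (f * g))ᴴ * D' f = μ f g • (D' g)ᴴ := by
    intro g
    have h1 : (D' g)ᴴ * (D' f)ᴴ = star (μ f g) • (D' (f * g))ᴴ := by
      rw [← Matrix.conjTranspose_mul, hDm' f g, Matrix.conjTranspose_smul]
    have hu : (D' f)ᴴ * D' f = 1 := Matrix.mem_unitaryGroup_iff'.mp (hDu' f)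
    have h2 : (D' g)ᴴ = star (μ f g) • ((D' (f * g))ᴴ * D' f) := by
      calc (D' g)ᴴ = (D' g)ᴴ * ((D' f)ᴴ * D' f) := by rw [hu, mul_one]
      _ = ((D' g)ᴴ * (D' f)ᴴ) * D' f := by rw [mul_assoc]
      _ = star (μ f g) • ((D' (f * g))ᴴ * D' f) := by rw [h1, Matrix.smul_mul]
    have habs : μ f g * star (μ f g) = 1 := by
      have h := Complex.mul_conj (μ f g)
      have : Complex.normSq (μ f g) = 1 := by
        have := Complex.sq_norm (μ f g)
        rw [hμabs f g] at this
        simpa using this.symm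
      rw [Complex.star_def, h, this, Complex.ofReal_one]
    calc (D' (f * g))ᴴ * D' f = (μ f g * star (μ f g)) • ((D' (f * g))ᴴ * D' f) := by
          rw [habs, one_smul]
      _ = μ f g • (star (μ f g) • ((D' (f * g))ᴴ * D' f)) := by rw [mul_smul]
      _ = μ f g • (D' g)ᴴ := by rw [← h2]
  rw [Matrix.mul_sum, Matrix.sum_mul]
  rw [← Equiv.sum_comp (Equiv.mulLeft f) (fun g => D g * X * (D' g)ᴴ * D' f)]
  refine Finset.sum_congr rfl fun g _ => ?_
  simp only [Equiv.coe_mulLeft]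
  calc D f * (D g * X * (D' g)ᴴ) = (D f * D g) * X * (D' g)ᴴ := by
        rw [← Matrix.mul_assoc, ← Matrix.mul_assoc]
    _ = μ f g • (D (f * g) * X * (D' g)ᴴ) := by rw [hDm f g, Matrix.smul_mul, Matrix.smul_mul]
    _ = (D (f * g) * X) * (μ f g • (D' g)ᴴ) := by rw [Matrix.mul_smul, Matrix.mul_assoc]
    _ = D (f * g) * X * (D' (f * g))ᴴ * D' f := by
        rw [← key g, Matrix.mul_assoc (D (f*g)) X, Matrix.mul_assoc, Matrix.mul_assoc]

lemma entry_formula {k k' : ℕ} (A : Matrix (Fin k) (Fin k) ℂ) (Bm : Matrix (Fin k') (Fin k') ℂ)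
    (a j : Fin k) (b j' : Fin k') :
    (A * Matrix.single a b (1:ℂ) * Bmᴴ) j j' = A j a * star (Bm j' b) := by
  simp [Matrix.mul_apply, Matrix.single, Matrix.conjTranspose_apply, ite_mul, mul_ite,
    Matrix.of_apply, Finset.mul_sum, Finset.sum_mul, ite_and, Finset.sum_ite_eq, Finset.sum_ite_eq']

lemma trace_formula {k : ℕ} (A : Matrix (Fin k) (Fin k) ℂ) (X : Matrix (Fin k) (Fin k) ℂ)
    (hA : Aᴴ * A = 1) :
    Matrix.trace (A * X * Aᴴ) = Matrix.trace X := by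
  rw [Matrix.trace_mul_cycle, hA, Matrix.one_mul]

lemma ortho_eq {G : Type*} [Group G] [Fintype G]
    (μ : G → G → ℂ) (hμabs : ∀ f g : G, ‖μ f g‖ = 1)
    {k : ℕ} (hk : 1 ≤ k)
    (D : G → Matrix (Fin k) (Fin k) ℂ)
    (hDm : ∀ f g : G, D f * D g = μ f g • D (f * g))
    (hDu : ∀ f : G, D f ∈ Matrix.unitaryGroup (Fin k) ℂ)
    (hirr : ∀ (S : Submodule ℂ (Fin k → ℂ)),
      (∀ f : G, ∀ v ∈ S, (D f).mulVec v ∈ S) → S = ⊥ ∨ S = ⊤)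
    (a b j j' : Fin k) :
    ∑ g : G, D g j a * star (D g j' b)
      = if j = j' ∧ a = b then (Fintype.card G : ℂ) / (k : ℂ) else 0 := by
  set T := ∑ g : G, D g * Matrix.single a b (1:ℂ) * (D g)ᴴ with hTdef
  obtain ⟨c, hc⟩ := schur_scalar_s12 hk D hirr T
    (fun f => avg_intertwine μ hμabs D D hDm hDm hDu _ f)
  have htr : Matrix.trace T = (Fintype.card G : ℂ) * (if a = b then 1 else 0) := by
    rw [hTdef, Matrix.trace_sum]
    have : ∀ g : G, Matrix.trace (D g * Matrix.single a b (1:ℂ) * (D g)ᴴ)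
        = (if a = b then 1 else 0 : ℂ) := by
      intro g
      rw [trace_formula _ _ (Matrix.mem_unitaryGroup_iff'.mp (hDu g))]
      simp only [Matrix.trace]
      by_cases h : a = b
      · subst h; simp [Matrix.diag, Matrix.single, ite_and, Finset.sum_ite_eq]
      · rw [if_neg h]
        apply Finset.sum_eq_zero
        intro i _
        simp only [Matrix.diag_apply, Matrix.single, Matrix.of_apply]
        rw [if_neg]
        rintro ⟨rfl, rfl⟩
        exact h rfl
    rw [Finset.sum_congr rfl fun g _ => this g]
    simp [mul_comm]
  have htr' : Matrix.trace T = c * (k : ℂ) := by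
    rw [hc]; simp [Matrix.trace_smul, Matrix.trace_one, mul_comm]
  have hent : T j j' = ∑ g : G, D g j a * star (D g j' b) := by
    rw [hTdef, Matrix.sum_apply]
    exact Finset.sum_congr rfl fun g _ => entry_formula (D g) (D g) a j b j'
  have hk0 : (k : ℂ) ≠ 0 := Nat.cast_ne_zero.mpr (by omega)
  rw [← hent, hc]
  by_cases hjj : j = j'
  · subst hjj
    by_cases hab : a = b
    · subst hab
      have hcval : c = (Fintype.card G : ℂ) / (k : ℂ) := by
        field_simp
        rw [← htr', htr]; simp [mul_comm]
      simp [Matrix.smul_apply, Matrix.one_apply, hcval]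
    · have h0 : c * (k:ℂ) = 0 := by rw [← htr', htr]; simp [hab]
      have hcval : c = 0 := by
        rcases mul_eq_zero.mp h0 with h | h
        · exact h
        · exact absurd h hk0
      simp [Matrix.smul_apply, Matrix.one_apply, hcval, hab]
  · simp [Matrix.smul_apply, Matrix.one_apply, hjj]

lemma ortho_ne {G : Type*} [Group G] [Fintype G]
    (μ : G → G → ℂ) (hμabs : ∀ f g : G, ‖μ f g‖ = 1)
    {k k' : ℕ} (hk' : 1 ≤ k')
    (D : G → Matrix (Fin k) (Fin k) ℂ) (D' : G → Matrix (Fin k') (Fin k') ℂ)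
    (hDm : ∀ f g : G, D f * D g = μ f g • D (f * g))
    (hDm' : ∀ f g : G, D' f * D' g = μ f g • D' (f * g))
    (hDu' : ∀ f : G, D' f ∈ Matrix.unitaryGroup (Fin k') ℂ)
    (hirr : ∀ (S : Submodule ℂ (Fin k → ℂ)),
      (∀ f : G, ∀ v ∈ S, (D f).mulVec v ∈ S) → S = ⊥ ∨ S = ⊤)
    (hirr' : ∀ (S : Submodule ℂ (Fin k' → ℂ)),
      (∀ f : G, ∀ v ∈ S, (D' f).mulVec v ∈ S) → S = ⊥ ∨ S = ⊤)
    (hineq : ¬ ∃ (S : Matrix (Fin k) (Fin k') ℂ) (T : Matrix (Fin k') (Fin k) ℂ),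
        S * T = 1 ∧ T * S = 1 ∧ ∀ f : G, S * D' f = D f * S)
    (a : Fin k) (b : Fin k') (j : Fin k) (j' : Fin k') :
    ∑ g : G, D g j a * star (D' g j' b) = 0 := by
  set T := ∑ g : G, D g * Matrix.single a b (1:ℂ) * (D' g)ᴴ with hTdef
  have hint : ∀ f : G, T * D' f = D f * T :=
    fun f => (avg_intertwine μ hμabs D D' hDm hDm' hDu' _ f).symm
  have hT0 : T = 0 := schur_zero hk' D' D hirr' hirr hineq T hint
  have hent : T j j' = ∑ g : G, D g j a * star (D' g j' b) := by
    rw [hTdef, Matrix.sum_apply]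
    exact Finset.sum_congr rfl fun g _ => entry_formula (D g) (D' g) a j b j'
  rw [← hent, hT0]
  simp

open Kronecker

theorem stmt_12 {G : Type*} [Group G] [Fintype G] [DecidableEq G]
    (μ : G → G → ℂ)
    (hμabs : ∀ f g : G, ‖μ f g‖ = 1)
    (hμel : ∀ f : G, μ 1 f = 1) (hμer : ∀ f : G, μ f 1 = 1)
    (hμc : ∀ f g h : G, μ h f * μ (h * f) g = μ h (f * g) * μ f g)
    {ι : Type*} [Fintype ι] [DecidableEq ι]
    (d : ι → ℕ) (hd : ∀ lam : ι, 1 ≤ d lam)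
    (D : (lam : ι) → G → Matrix (Fin (d lam)) (Fin (d lam)) ℂ)
    (hDu : ∀ (lam : ι) (f : G), D lam f ∈ Matrix.unitaryGroup (Fin (d lam)) ℂ)
    (hDe : ∀ lam : ι, D lam 1 = 1)
    (hDm : ∀ (lam : ι) (f g : G), D lam f * D lam g = μ f g • D lam (f * g))
    (hirr : ∀ (lam : ι) (S : Submodule ℂ (Fin (d lam) → ℂ)),
      (∀ (f : G), ∀ v ∈ S, (D lam f).mulVec v ∈ S) → S = ⊥ ∨ S = ⊤)
    (hineq : ∀ lam lam' : ι, lam ≠ lam' →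
      ¬ ∃ (S : Matrix (Fin (d lam')) (Fin (d lam)) ℂ)
          (T : Matrix (Fin (d lam)) (Fin (d lam')) ℂ),
        S * T = 1 ∧ T * S = 1 ∧ ∀ f : G, S * D lam f = D lam' f * S)
    (hcomplete : ∑ lam : ι, (d lam) ^ 2 = Fintype.card G)
    {B : Type*} [Fintype B] [DecidableEq B] [Nonempty B]
    (W : G → Matrix B B ℂ)
    (Q : (lam : ι) → Matrix (Fin (d lam) × B) (Fin (d lam) × B) ℂ)
    (hQ : ∀ lam : ι, Q lam = ∑ f : G, (D lam f) ⊗ₖ (W f)) :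
    ∀ (f : G) (p q : B),
      W f p q = ∑ lam : ι, ((d lam : ℂ) / (Fintype.card G : ℂ))
        * ∑ j : Fin (d lam), ∑ k : Fin (d lam),
            star (D lam f j k) * Q lam (j, p) (k, q) := by
  classical
  intro f p q
  set N : ℂ := (Fintype.card G : ℂ) with hN
  have hNne : N ≠ 0 := by
    rw [hN]
    exact_mod_cast Nat.cast_ne_zero.mpr Fintype.card_ne_zero
  set M : Matrix ((lam : ι) × (Fin (d lam) × Fin (d lam))) G ℂ :=
    Matrix.of (fun x g => D x.1 g x.2.1 x.2.2) with hM
  set M' : Matrix G ((lam : ι) × (Fin (d lam) × Fin (d lam))) ℂ :=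
    Matrix.of (fun g x => ((d x.1 : ℂ) / N) * star (D x.1 g x.2.1 x.2.2)) with hM'
  have h1 : M * M' = 1 := by
    ext x y
    obtain ⟨lam, j, a⟩ := x
    obtain ⟨lam', j', b⟩ := y
    rw [Matrix.mul_apply]
    have hfac : ∀ g : G, M ⟨lam, j, a⟩ g * M' g ⟨lam', j', b⟩
        = ((d lam' : ℂ) / N) * (D lam g j a * star (D lam' g j' b)) := by
      intro g
      simp only [hM, hM', Matrix.of_apply]
      ring
    rw [Finset.sum_congr rfl fun g _ => hfac g, ← Finset.mul_sum]
    by_cases hll : lam = lam'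
    · subst hll
      rw [ortho_eq μ hμabs (hd lam) (D lam) (hDm lam) (hDu lam) (hirr lam) a b j j']
      have hdne : (d lam : ℂ) ≠ 0 := Nat.cast_ne_zero.mpr (by have := hd lam; omega)
      by_cases hcase : j = j' ∧ a = b
      · obtain ⟨rfl, rfl⟩ := hcase
        rw [if_pos (⟨rfl, rfl⟩ : j = j ∧ a = a), Matrix.one_apply_eq]
        field_simp
        exact hN.symm
      · have hne : (⟨lam, (j, a)⟩ : (lam : ι) × (Fin (d lam) × Fin (d lam))) ≠ ⟨lam, (j', b)⟩ := by
          intro h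
          simp only [Sigma.mk.inj_iff, heq_eq_eq, Prod.mk.injEq, true_and] at h
          exact hcase h
        rw [if_neg hcase, mul_zero, Matrix.one_apply_ne hne]
    · have hne : (⟨lam, (j, a)⟩ : (lam : ι) × (Fin (d lam) × Fin (d lam))) ≠ ⟨lam', (j', b)⟩ :=
        fun h => hll (congrArg Sigma.fst h)
      rw [ortho_ne μ hμabs (hd lam') (D lam) (D lam') (hDm lam) (hDm lam') (hDu lam')
        (hirr lam) (hirr lam') (hineq lam' lam (Ne.symm hll)) a b j j', mul_zero,
        Matrix.one_apply_ne hne]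
  have hcard : Fintype.card ((lam : ι) × (Fin (d lam) × Fin (d lam))) = Fintype.card G := by
    rw [Fintype.card_sigma]
    rw [← hcomplete]
    refine Finset.sum_congr rfl fun lam _ => ?_
    simp [sq]
  have h2 : M' * M = 1 :=
    (Matrix.mul_eq_one_comm_of_equiv (Fintype.equivOfCardEq hcard)).mp h1
  have key : ∀ g : G,
      (∑ lam : ι, ((d lam : ℂ) / N) * ∑ j : Fin (d lam), ∑ k : Fin (d lam),
        star (D lam f j k) * D lam g j k) = if f = g then 1 else 0 := by
    intro g
    have := congrFun (congrFun h2 f) g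
    rw [Matrix.mul_apply] at this
    rw [← Matrix.one_apply (i := f) (j := g), ← this]
    rw [← Finset.univ_sigma_univ, Finset.sum_sigma]
    refine Finset.sum_congr rfl fun lam _ => ?_
    rw [Fintype.sum_prod_type, Finset.mul_sum]
    refine Finset.sum_congr rfl fun j _ => ?_
    rw [Finset.mul_sum]
    refine Finset.sum_congr rfl fun k _ => ?_
    simp only [hM, hM', Matrix.of_apply]
    ring
  have hQ' : ∀ (lam : ι) (j k : Fin (d lam)),
      Q lam (j, p) (k, q) = ∑ g : G, D lam g j k * W g p q := by
    intro lam j k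
    rw [hQ lam, Matrix.sum_apply]
    exact Finset.sum_congr rfl fun g _ => rfl
  symm
  calc ∑ lam : ι, ((d lam : ℂ) / N) * ∑ j : Fin (d lam), ∑ k : Fin (d lam),
          star (D lam f j k) * Q lam (j, p) (k, q)
      = ∑ lam : ι, ∑ g : G, (((d lam : ℂ) / N) * ∑ j : Fin (d lam), ∑ k : Fin (d lam),
          star (D lam f j k) * D lam g j k) * W g p q := by
        refine Finset.sum_congr rfl fun lam _ => ?_
        have e1 : ∀ j k : Fin (d lam), star (D lam f j k) * Q lam (j, p) (k, q)
            = ∑ g : G, star (D lam f j k) * (D lam g j k * W g p q) := by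
          intro j k
          rw [hQ' lam j k, Finset.mul_sum]
        calc ((d lam : ℂ) / N) * ∑ j : Fin (d lam), ∑ k : Fin (d lam),
                star (D lam f j k) * Q lam (j, p) (k, q)
            = ((d lam : ℂ) / N) * ∑ g : G, ∑ j : Fin (d lam), ∑ k : Fin (d lam),
                star (D lam f j k) * (D lam g j k * W g p q) := by
              congr 1
              calc ∑ j : Fin (d lam), ∑ k : Fin (d lam),
                      star (D lam f j k) * Q lam (j, p) (k, q)
                  = ∑ j : Fin (d lam), ∑ k : Fin (d lam), ∑ g : G,
                      star (D lam f j k) * (D lam g j k * W g p q) :=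
                    Finset.sum_congr rfl fun j _ => Finset.sum_congr rfl fun k _ => e1 j k
                _ = ∑ j : Fin (d lam), ∑ g : G, ∑ k : Fin (d lam),
                      star (D lam f j k) * (D lam g j k * W g p q) :=
                    Finset.sum_congr rfl fun j _ => Finset.sum_comm
                _ = ∑ g : G, ∑ j : Fin (d lam), ∑ k : Fin (d lam),
                      star (D lam f j k) * (D lam g j k * W g p q) := Finset.sum_comm
          _ = ∑ g : G, (((d lam : ℂ) / N) * ∑ j : Fin (d lam), ∑ k : Fin (d lam),
                star (D lam f j k) * D lam g j k) * W g p q := by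
              rw [Finset.mul_sum]
              refine Finset.sum_congr rfl fun g _ => ?_
              rw [mul_assoc, Finset.sum_mul]
              congr 1
              refine Finset.sum_congr rfl fun j _ => ?_
              rw [Finset.sum_mul]
              exact Finset.sum_congr rfl fun k _ => (mul_assoc _ _ _).symm
    _ = ∑ g : G, (∑ lam : ι, ((d lam : ℂ) / N) * ∑ j : Fin (d lam), ∑ k : Fin (d lam),
          star (D lam f j k) * D lam g j k) * W g p q := by
        rw [Finset.sum_comm]
        exact Finset.sum_congr rfl fun g _ => (Finset.sum_mul _ _ _).symm
    _ = ∑ g : G, (if f = g then 1 else 0) * W g p q :=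
        Finset.sum_congr rfl fun g _ => by rw [key g]
    _ = W f p q := by simp
end

section
/- Let G be a finite group, μ : G → G → ℂ a factor system (|μ(f,g)| = 1 for all f,g; μ(e,f) = μ(f,e) = 1; and μ(h,f)μ(hf,g) = μ(h,fg)μ(f,g) for all f,g,h), A a nonempty finite index type, and U : G → Matrix A A ℂ a projective unitary representation of G with factor system μ. Let B be a nonempty finite index type and W : G → Matrix B B ℂ arbitrary. Then for every g ∈ G: Σ_{f∈G} ((U g)† · (U f)) ⊗ (μ(g, g⁻¹f) • W(g⁻¹f)) = Σ_{f∈G} (U f) ⊗ (W f). In particular the left-hand side is independent of g. -/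
open Matrix Kronecker

theorem stmt_14 {G : Type*} [Group G] [Fintype G] [DecidableEq G]
    (μ : G → G → ℂ)
    (hμabs : ∀ f g : G, ‖μ f g‖ = 1)
    (hμel : ∀ f : G, μ 1 f = 1) (hμer : ∀ f : G, μ f 1 = 1)
    (hμc : ∀ f g h : G, μ h f * μ (h * f) g = μ h (f * g) * μ f g)
    {A : Type*} [Fintype A] [DecidableEq A] [Nonempty A]
    (U : G → Matrix A A ℂ)
    (hUu : ∀ f : G, U f ∈ Matrix.unitaryGroup A ℂ)
    (hUe : U 1 = 1)
    (hUm : ∀ f g : G, U f * U g = μ f g • U (f * g))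
    {B : Type*} [Fintype B] [DecidableEq B] [Nonempty B]
    (W : G → Matrix B B ℂ) :
    ∀ g : G, ∑ f : G, ((U g)ᴴ * U f) ⊗ₖ (μ g (g⁻¹ * f) • W (g⁻¹ * f))
      = ∑ f : G, (U f) ⊗ₖ (W f) := by
  intro g
  rw [← Equiv.sum_comp (Equiv.mulLeft g) (fun f => ((U g)ᴴ * U f) ⊗ₖ (μ g (g⁻¹ * f) • W (g⁻¹ * f)))]
  refine Finset.sum_congr rfl fun f _ => ?_
  simp only [Equiv.coe_mulLeft, inv_mul_cancel_left]
  have h1 : (U g)ᴴ * U g = 1 := by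
    have := (Matrix.mem_unitaryGroup_iff'.mp (hUu g))
    simpa [Matrix.star_eq_conjTranspose] using this
  have h2 : μ g f • ((U g)ᴴ * U (g * f)) = U f := by
    calc μ g f • ((U g)ᴴ * U (g * f)) = (U g)ᴴ * (μ g f • U (g * f)) := by
          rw [Matrix.mul_smul]
      _ = (U g)ᴴ * (U g * U f) := by rw [← hUm]
      _ = U f := by rw [← mul_assoc, h1, one_mul]
  calc ((U g)ᴴ * U (g * f)) ⊗ₖ (μ g f • W f)
      = (μ g f • ((U g)ᴴ * U (g * f))) ⊗ₖ W f := by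
        rw [Matrix.kronecker_smul, Matrix.smul_kronecker]
    _ = U f ⊗ₖ W f := by rw [h2]
end

section
/- Let G be a finite group, γ : G → G → ℂ a factor system (|γ(f,g)| = 1 for all f,g; γ(e,f) = γ(f,e) = 1; and γ(h,f)γ(hf,g) = γ(h,fg)γ(f,g) for all f,g,h), and c : G → ℂ. Define R' : G → Matrix G G ℂ by R'(f)(g,k) = γ(g,f) if k = g·f and 0 otherwise, and set C := Σ_{f∈G} c(f) • R'(f), so that C(g,f) = γ(g, g⁻¹f) c(g⁻¹f). Then C is unitary if and only if for every g ∈ G, Σ_{f∈G} conj(γ(f,g)) · conj(c(f)) · c(fg) = (if g = e then 1 else 0). -/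
open Matrix

theorem stmt_15 {G : Type*} [Group G] [Fintype G] [DecidableEq G]
    (γ : G → G → ℂ)
    (hγabs : ∀ f g : G, ‖γ f g‖ = 1)
    (hγel : ∀ f : G, γ 1 f = 1) (hγer : ∀ f : G, γ f 1 = 1)
    (hγc : ∀ f g h : G, γ h f * γ (h * f) g = γ h (f * g) * γ f g)
    (c : G → ℂ)
    (R' : G → Matrix G G ℂ)
    (hR' : ∀ f g k : G, R' f g k = if k = g * f then γ g f else 0) :
    (∑ f : G, c f • R' f) ∈ Matrix.unitaryGroup G ℂ ↔
      ∀ g : G, ∑ f : G, star (γ f g) * star (c f) * c (f * g)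
        = if g = 1 then 1 else 0 := by
  set C : Matrix G G ℂ := ∑ f : G, c f • R' f with hC
  have hstar : ∀ f g : G, star (γ f g) * γ f g = 1 := by
    intro f g
    have h1 : Complex.normSq (γ f g) = 1 := by
      rw [Complex.normSq_eq_norm_sq, hγabs]; norm_num
    rw [Complex.star_def, ← Complex.normSq_eq_conj_mul_self, h1, Complex.ofReal_one]
  have hCentry : ∀ a k : G, C a k = γ a (a⁻¹ * k) * c (a⁻¹ * k) := by
    intro a k
    rw [hC, Matrix.sum_apply]
    rw [Finset.sum_eq_single (a⁻¹ * k)]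
    · simp [hR', mul_comm]
    · intro f _ hf
      simp only [Matrix.smul_apply, hR', smul_eq_mul]
      rw [if_neg, mul_zero]
      intro h
      exact hf (by rw [h]; group)
    · simp
  -- phase identity
  have hphase : ∀ a f g : G, star (γ (a * f⁻¹) f) * γ (a * f⁻¹) (f * g)
      = γ a g * star (γ f g) := by
    intro a f g
    have h1 : γ (a * f⁻¹) (f * g) * γ f g = γ (a * f⁻¹) f * γ a g := by
      have := hγc f g (a * f⁻¹)
      rw [inv_mul_cancel_right] at this
      linear_combination this.symm
    have e1 := hstar (a * f⁻¹) f
    have e2 := hstar f g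
    linear_combination star (γ (a * f⁻¹) f) * star (γ f g) * h1
      - star (γ (a * f⁻¹) f) * γ (a * f⁻¹) (f * g) * e2
      + γ a g * star (γ f g) * e1
  have key : ∀ a b : G, (star C * C) a b
      = γ a (a⁻¹ * b) * ∑ f : G, star (γ f (a⁻¹ * b)) * star (c f) * c (f * (a⁻¹ * b)) := by
    intro a b
    rw [Matrix.mul_apply, Finset.mul_sum]
    have e : G ≃ G := (Equiv.inv G).trans (Equiv.mulLeft a)
    rw [← Equiv.sum_comp ((Equiv.inv G).trans (Equiv.mulLeft a))
      (fun j => (star C) a j * C j b)]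
    apply Finset.sum_congr rfl
    intro f _
    have hj : ((Equiv.inv G).trans (Equiv.mulLeft a)) f = a * f⁻¹ := rfl
    rw [hj]
    have h1 : (star C) a (a * f⁻¹) = star (C (a * f⁻¹) a) := rfl
    rw [h1, hCentry, hCentry]
    have h2 : (a * f⁻¹)⁻¹ * a = f := by group
    have h3 : (a * f⁻¹)⁻¹ * b = f * (a⁻¹ * b) := by group
    rw [h2, h3, star_mul']
    have := hphase a f (a⁻¹ * b)
    linear_combination star (c f) * c (f * (a⁻¹ * b)) * this
  constructor
  · intro hU g
    have h1 : star C * C = 1 := Matrix.mem_unitaryGroup_iff'.mp hU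
    have h2 := congrArg (fun M => M 1 g) h1
    simp only [key] at h2
    rw [inv_one] at h2
    simp only [one_mul, hγel] at h2
    rw [h2]
    by_cases hg : g = 1 <;> simp [Matrix.one_apply, hg, eq_comm]
  · intro hD
    rw [Matrix.mem_unitaryGroup_iff']
    ext a b
    rw [key, hD (a⁻¹ * b)]
    by_cases hab : a = b
    · subst hab
      simp [hγer]
    · have h1 : a⁻¹ * b ≠ 1 := by
        simp [inv_mul_eq_one, hab]
      simp [Matrix.one_apply, hab, h1]
end

section
/- Let G be a finite group, and let μ, ν : G → G → ℂ be factor systems (each with all values of modulus 1, value 1 whenever one argument is e, and satisfying the cocycle identity). Let A, B be nonempty finite index types, U : G → Matrix A A ℂ a projective unitary representation of G with factor system μ, and V : G → Matrix B B ℂ a projective unitary representation of G with factor system ν. Suppose c : G → ℂ satisfies, for every g ∈ G, Σ_{f∈G} conj(μ(f,g)·ν(f,g)) · conj(c(f)) · c(fg) = (if g = e then 1 else 0). Then 𝒰 := Σ_{f∈G} c(f) • ((U f) ⊗ (V f)) is a unitary matrix on ℂ^(A×B). -/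
open Matrix Kronecker

theorem stmt_16 {G : Type*} [Group G] [Fintype G] [DecidableEq G]
    (μ ν : G → G → ℂ)
    (hμabs : ∀ f g : G, ‖μ f g‖ = 1)
    (hμel : ∀ f : G, μ 1 f = 1) (hμer : ∀ f : G, μ f 1 = 1)
    (hμc : ∀ f g h : G, μ h f * μ (h * f) g = μ h (f * g) * μ f g)
    (hνabs : ∀ f g : G, ‖ν f g‖ = 1)
    (hνel : ∀ f : G, ν 1 f = 1) (hνer : ∀ f : G, ν f 1 = 1)
    (hνc : ∀ f g h : G, ν h f * ν (h * f) g = ν h (f * g) * ν f g)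
    {A B : Type*} [Fintype A] [DecidableEq A] [Nonempty A]
    [Fintype B] [DecidableEq B] [Nonempty B]
    (U : G → Matrix A A ℂ)
    (hUu : ∀ f : G, U f ∈ Matrix.unitaryGroup A ℂ)
    (hUe : U 1 = 1)
    (hUm : ∀ f g : G, U f * U g = μ f g • U (f * g))
    (V : G → Matrix B B ℂ)
    (hVu : ∀ f : G, V f ∈ Matrix.unitaryGroup B ℂ)
    (hVe : V 1 = 1)
    (hVm : ∀ f g : G, V f * V g = ν f g • V (f * g))
    (c : G → ℂ)
    (hc : ∀ g : G, ∑ f : G, star (μ f g * ν f g) * star (c f) * c (f * g)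
      = if g = 1 then 1 else 0) :
    (∑ f : G, c f • ((U f) ⊗ₖ (V f))) ∈ Matrix.unitaryGroup (A × B) ℂ := by
  have hs : ∀ w : ℂ, ‖w‖ = 1 → star w * w = 1 := by
    intro w hw
    have : (starRingEnd ℂ) w * w = 1 := by
      rw [mul_comm, Complex.mul_conj, Complex.normSq_eq_norm_sq, hw]
      norm_num
    exact this
  have keyU : ∀ f g : G, (U f)ᴴ * U (f * g) = star (μ f g) • U g := by
    intro f g
    have h1 : (U f)ᴴ * U f = 1 := (hUu f).1
    have h2 : (U f)ᴴ * (U f * U g) = U g := by rw [← mul_assoc, h1, one_mul]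
    rw [hUm, mul_smul_comm] at h2
    calc (U f)ᴴ * U (f * g)
        = (star (μ f g) * μ f g) • ((U f)ᴴ * U (f * g)) := by
          rw [hs _ (hμabs f g), one_smul]
      _ = star (μ f g) • (μ f g • ((U f)ᴴ * U (f * g))) := by rw [smul_smul]
      _ = star (μ f g) • U g := by rw [h2]
  have keyV : ∀ f g : G, (V f)ᴴ * V (f * g) = star (ν f g) • V g := by
    intro f g
    have h1 : (V f)ᴴ * V f = 1 := (hVu f).1
    have h2 : (V f)ᴴ * (V f * V g) = V g := by rw [← mul_assoc, h1, one_mul]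
    rw [hVm, mul_smul_comm] at h2
    calc (V f)ᴴ * V (f * g)
        = (star (ν f g) * ν f g) • ((V f)ᴴ * V (f * g)) := by
          rw [hs _ (hνabs f g), one_smul]
      _ = star (ν f g) • (ν f g • ((V f)ᴴ * V (f * g))) := by rw [smul_smul]
      _ = star (ν f g) • V g := by rw [h2]
  have hK : ∀ (M : Matrix A A ℂ) (N : Matrix B B ℂ), (M ⊗ₖ N)ᴴ = Mᴴ ⊗ₖ Nᴴ := by
    intro M N
    ext ⟨i, j⟩ ⟨k, l⟩
    simp [Matrix.conjTranspose_apply, Matrix.kroneckerMap_apply]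
  have keyK : ∀ f g : G,
      (star (c f) • (U f ⊗ₖ V f)ᴴ) * (c (f * g) • (U (f * g) ⊗ₖ V (f * g)))
        = (star (μ f g * ν f g) * star (c f) * c (f * g)) • (U g ⊗ₖ V g) := by
    intro f g
    rw [smul_mul_assoc, mul_smul_comm, hK, ← Matrix.mul_kronecker_mul, keyU, keyV,
      Matrix.smul_kronecker, Matrix.kronecker_smul, smul_smul, smul_smul, smul_smul]
    congr 1
    rw [star_mul']
    ring
  rw [Matrix.mem_unitaryGroup_iff']
  have hstar : star (∑ f : G, c f • (U f ⊗ₖ V f))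
      = ∑ f : G, star (c f) • (U f ⊗ₖ V f)ᴴ := by
    rw [star_sum]
    exact Finset.sum_congr rfl fun f _ => by rw [star_smul]; rfl
  rw [hstar, Finset.sum_mul_sum]
  have hrow : ∀ f : G,
      ∑ h : G, (star (c f) • (U f ⊗ₖ V f)ᴴ) * (c h • (U h ⊗ₖ V h))
        = ∑ g : G, (star (μ f g * ν f g) * star (c f) * c (f * g)) • (U g ⊗ₖ V g) := by
    intro f
    rw [← Fintype.sum_equiv (Equiv.mulLeft f)
      (fun g => (star (c f) • (U f ⊗ₖ V f)ᴴ) * (c (f * g) • (U (f * g) ⊗ₖ V (f * g))))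
      (fun h => (star (c f) • (U f ⊗ₖ V f)ᴴ) * (c h • (U h ⊗ₖ V h)))
      (fun g => rfl)]
    exact Finset.sum_congr rfl fun g _ => keyK f g
  calc ∑ f : G, ∑ h : G, (star (c f) • (U f ⊗ₖ V f)ᴴ) * (c h • (U h ⊗ₖ V h))
      = ∑ f : G, ∑ g : G, (star (μ f g * ν f g) * star (c f) * c (f * g)) • (U g ⊗ₖ V g) :=
        Finset.sum_congr rfl fun f _ => hrow f
    _ = ∑ g : G, (∑ f : G, star (μ f g * ν f g) * star (c f) * c (f * g)) • (U g ⊗ₖ V g) := by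
        rw [Finset.sum_comm]
        exact Finset.sum_congr rfl fun g _ => (Finset.sum_smul).symm
    _ = ∑ g : G, (if g = 1 then (1 : ℂ) else 0) • (U g ⊗ₖ V g) := by
        exact Finset.sum_congr rfl fun g _ => by rw [hc g]
    _ = 1 := by
        simp [ite_smul, hUe, hVe, Matrix.one_kronecker_one]
end

section
/- Let G be a finite group, and let μ, ν : G → G → ℂ be factor systems (each with all values of modulus 1, value 1 whenever one argument is e, and satisfying the cocycle identity). Let A, B be nonempty finite index types, U : G → Matrix A A ℂ a projective unitary representation of G with factor system μ, and V : G → Matrix B B ℂ a projective unitary representation of G with factor system ν. Suppose the family (U f ⊗ V f)_{f∈G} of Kronecker products is linearly independent, and that for some c : G → ℂ the matrix 𝒰 := Σ_{f∈G} c(f) • ((U f) ⊗ (V f)) is unitary. Then for every g ∈ G, Σ_{f∈G} conj(μ(f,g)·ν(f,g)) · conj(c(f)) · c(fg) = (if g = e then 1 else 0). -/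
open Matrix Kronecker

lemma conjTranspose_kronecker' {A B m n : Type*} (X : Matrix A m ℂ) (Y : Matrix B n ℂ) :
    (X ⊗ₖ Y)ᴴ = Xᴴ ⊗ₖ Yᴴ := by
  ext ⟨i, j⟩ ⟨k, l⟩
  simp [Matrix.conjTranspose_apply, Matrix.kroneckerMap_apply, star_mul', mul_comm]

theorem stmt_17 {G : Type*} [Group G] [Fintype G] [DecidableEq G]
    (μ ν : G → G → ℂ)
    (hμabs : ∀ f g : G, ‖μ f g‖ = 1)
    (hμel : ∀ f : G, μ 1 f = 1) (hμer : ∀ f : G, μ f 1 = 1)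
    (hμc : ∀ f g h : G, μ h f * μ (h * f) g = μ h (f * g) * μ f g)
    (hνabs : ∀ f g : G, ‖ν f g‖ = 1)
    (hνel : ∀ f : G, ν 1 f = 1) (hνer : ∀ f : G, ν f 1 = 1)
    (hνc : ∀ f g h : G, ν h f * ν (h * f) g = ν h (f * g) * ν f g)
    {A B : Type*} [Fintype A] [DecidableEq A] [Nonempty A]
    [Fintype B] [DecidableEq B] [Nonempty B]
    (U : G → Matrix A A ℂ)
    (hUu : ∀ f : G, U f ∈ Matrix.unitaryGroup A ℂ)
    (hUe : U 1 = 1)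
    (hUm : ∀ f g : G, U f * U g = μ f g • U (f * g))
    (V : G → Matrix B B ℂ)
    (hVu : ∀ f : G, V f ∈ Matrix.unitaryGroup B ℂ)
    (hVe : V 1 = 1)
    (hVm : ∀ f g : G, V f * V g = ν f g • V (f * g))
    (hli : LinearIndependent ℂ (fun f : G => (U f) ⊗ₖ (V f)))
    (c : G → ℂ)
    (h𝒰 : (∑ f : G, c f • ((U f) ⊗ₖ (V f))) ∈ Matrix.unitaryGroup (A × B) ℂ) :
    ∀ g : G, ∑ f : G, star (μ f g * ν f g) * star (c f) * c (f * g)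
      = if g = 1 then 1 else 0 := by
  have hμunit : ∀ f g : G, star (μ f g) * μ f g = 1 := by
    intro f g
    rw [Complex.star_def, ← Complex.normSq_eq_conj_mul_self,
      Complex.normSq_eq_norm_sq, hμabs]; norm_num
  have hνunit : ∀ f g : G, star (ν f g) * ν f g = 1 := by
    intro f g
    rw [Complex.star_def, ← Complex.normSq_eq_conj_mul_self,
      Complex.normSq_eq_norm_sq, hνabs]; norm_num
  -- key relations
  have hUkey : ∀ f g : G, (U f)ᴴ * U (f * g) = star (μ f g) • U g := by
    intro f g
    have h1 : (U f)ᴴ * (U f * U g) = (U f)ᴴ * (μ f g • U (f * g)) := by rw [hUm]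
    have hs : (U f)ᴴ * U f = 1 := by
      rw [← Matrix.star_eq_conjTranspose]; exact Matrix.mem_unitaryGroup_iff'.mp (hUu f)
    rw [← mul_assoc, hs, one_mul, Matrix.mul_smul] at h1
    calc (U f)ᴴ * U (f * g) = (star (μ f g) * μ f g) • ((U f)ᴴ * U (f * g)) := by
          rw [hμunit]; simp
      _ = star (μ f g) • (μ f g • ((U f)ᴴ * U (f * g))) := by rw [smul_smul]
      _ = star (μ f g) • U g := by rw [← h1]
  have hVkey : ∀ f g : G, (V f)ᴴ * V (f * g) = star (ν f g) • V g := by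
    intro f g
    have h1 : (V f)ᴴ * (V f * V g) = (V f)ᴴ * (ν f g • V (f * g)) := by rw [hVm]
    have hs : (V f)ᴴ * V f = 1 := by
      rw [← Matrix.star_eq_conjTranspose]; exact Matrix.mem_unitaryGroup_iff'.mp (hVu f)
    rw [← mul_assoc, hs, one_mul, Matrix.mul_smul] at h1
    calc (V f)ᴴ * V (f * g) = (star (ν f g) * ν f g) • ((V f)ᴴ * V (f * g)) := by
          rw [hνunit]; simp
      _ = star (ν f g) • (ν f g • ((V f)ᴴ * V (f * g))) := by rw [smul_smul]
      _ = star (ν f g) • V g := by rw [← h1]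
  set W : G → Matrix (A × B) (A × B) ℂ := fun f => (U f) ⊗ₖ (V f) with hW
  have hWkey : ∀ f g : G, (W f)ᴴ * W (f * g) = star (μ f g * ν f g) • W g := by
    intro f g
    simp only [hW, _root_.conjTranspose_kronecker']
    rw [← Matrix.mul_kronecker_mul, hUkey, hVkey, Matrix.smul_kronecker,
      Matrix.kronecker_smul, smul_smul, star_mul', mul_comm]
  -- the unitarity identity
  have hmain : (∑ g : G, (∑ f : G, star (μ f g * ν f g) * star (c f) * c (f * g)) • W g)
      = ∑ g : G, (if g = 1 then (1 : ℂ) else 0) • W g := by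
    have h1 : star (∑ f : G, c f • W f) * (∑ f : G, c f • W f) = 1 :=
      Unitary.star_mul_self_of_mem h𝒰
    have h2 : star (∑ f : G, c f • W f) * (∑ f : G, c f • W f)
        = ∑ g : G, (∑ f : G, star (μ f g * ν f g) * star (c f) * c (f * g)) • W g := by
      rw [Matrix.star_eq_conjTranspose, Matrix.conjTranspose_sum]
      simp only [Matrix.conjTranspose_smul]
      rw [Finset.sum_mul_sum]
      have h3 : ∀ f : G, ∑ h : G, (star (c f) • (W f)ᴴ) * (c h • W h)
          = ∑ g : G, (star (μ f g * ν f g) * star (c f) * c (f * g)) • W g := by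
        intro f
        rw [← Equiv.sum_comp (Equiv.mulLeft f) (fun h => (star (c f) • (W f)ᴴ) * (c h • W h))]
        refine Finset.sum_congr rfl fun g _ => ?_
        simp only [Equiv.coe_mulLeft]
        rw [Matrix.smul_mul, Matrix.mul_smul, hWkey f g, smul_smul, smul_smul]
        ring_nf
      calc ∑ f : G, ∑ h : G, (star (c f) • (W f)ᴴ) * (c h • W h)
          = ∑ f : G, ∑ g : G, (star (μ f g * ν f g) * star (c f) * c (f * g)) • W g := by
            exact Finset.sum_congr rfl fun f _ => h3 f
        _ = ∑ g : G, (∑ f : G, star (μ f g * ν f g) * star (c f) * c (f * g)) • W g := by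
            rw [Finset.sum_comm]
            simp [Finset.sum_smul]
    have h4 : (∑ g : G, (if g = 1 then (1 : ℂ) else 0) • W g) = 1 := by
      simp only [ite_smul, zero_smul, one_smul]
      rw [Finset.sum_ite_eq' Finset.univ (1 : G) W]
      simp [hW, hUe, hVe, Matrix.one_kronecker_one]
    rw [← h2, h4, h1]
  -- linear independence
  intro g
  have := Fintype.linearIndependent_iff.mp hli
    (fun g => (∑ f : G, star (μ f g * ν f g) * star (c f) * c (f * g))
      - (if g = 1 then 1 else 0)) ?_ g
  · exact sub_eq_zero.mp this
  · simp only [sub_smul, Finset.sum_sub_distrib, hmain, sub_self]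
end
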